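/- arXiv:2605.04658 — 5 statements merged into one kernel-verified Lean document; each statement's English description precedes it below -/
import Mathlib

section
/- Let φ : ℝ^n → ℝ be C-semiconcave and let γ : [0,T] → ℝ^n be Lipschitz. Then φ∘γ is Lipschitz, and for almost every s ∈ (0,T) the derivatives γ'(s) and (φ∘γ)'(s) exist and (φ∘γ)'(s) = ⟨p, γ'(s)⟩ for every p ∈ D⁺φ(γ(s)); in particular, at almost every s the value ⟨p, γ'(s)⟩ is independent of the choice of p ∈ D⁺φ(γ(s)). -/
open MeasureTheory Set Filter Topology
open scoped RealInnerProductSpace NNReal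

noncomputable section

abbrev E (n : ℕ) := EuclideanSpace ℝ (Fin n)

variable {n : ℕ}

/-- `φ` is semiconcave with linear modulus and constant `C`. -/
def Semiconcave (C : ℝ) (φ : E n → ℝ) : Prop :=
  ConcaveOn ℝ Set.univ (fun x => φ x - C / 2 * ‖x‖ ^ 2)

/-- The superdifferential of `φ` at `x`. -/
def superdiff (φ : E n → ℝ) (x : E n) : Set (E n) :=
  {p | ∀ ε > 0, ∀ᶠ y in 𝓝 x, φ y - φ x - ⟪p, y - x⟫ ≤ ε * ‖y - x‖}

lemma aux_deriv_zero {g : ℝ → ℝ} {a s : ℝ} (hg : HasDerivAt g a s)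
    (h : ∀ ε > 0, ∀ᶠ t in 𝓝 s, g t - g s ≤ ε * |t - s|) : a = 0 := by
  have hslope := hasDerivAt_iff_tendsto_slope.1 hg
  have habs : ∀ ε > 0, |a| ≤ ε := by
    intro ε hε
    have hev := h ε hε
    have h1 : a ≤ ε := by
      have htend : Tendsto (slope g s) (𝓝[>] s) (𝓝 a) :=
        hslope.mono_left (nhdsWithin_mono s (fun x hx => hx.ne'))
      refine le_of_tendsto htend ?_
      filter_upwards [hev.filter_mono nhdsWithin_le_nhds, self_mem_nhdsWithin] with t ht hts
      have h0 : 0 < t - s := sub_pos.2 hts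
      rw [slope_def_field, div_le_iff₀ h0]
      calc g t - g s ≤ ε * |t - s| := ht
        _ = ε * (t - s) := by rw [abs_of_pos h0]
    have h2 : -ε ≤ a := by
      have htend : Tendsto (slope g s) (𝓝[<] s) (𝓝 a) :=
        hslope.mono_left (nhdsWithin_mono s (fun x hx => hx.ne))
      refine ge_of_tendsto htend ?_
      filter_upwards [hev.filter_mono nhdsWithin_le_nhds, self_mem_nhdsWithin] with t ht hts
      have h0 : t - s < 0 := sub_neg.2 hts
      rw [slope_def_field, le_div_iff_of_neg h0]
      calc g t - g s ≤ ε * |t - s| := ht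
        _ = -ε * (t - s) := by rw [abs_of_neg h0]; ring
    exact abs_le.2 ⟨h2, h1⟩
  have : |a| ≤ 0 := by
    by_contra hcon
    push_neg at hcon
    have := habs (|a| / 2) (by linarith)
    linarith
  exact abs_eq_zero.1 (le_antisymm this (abs_nonneg a))

/-- A semiconcave function is Lipschitz on balls. -/
lemma aux_lip {C : ℝ} (hC : 0 ≤ C) {φ : E n → ℝ} (hφ : Semiconcave C φ)
    {R : ℝ} (hR : 0 < R) : ∃ K : ℝ≥0, LipschitzOnWith K φ (Metric.ball 0 R) := by
  set ψ : E n → ℝ := fun x => φ x - C / 2 * ‖x‖ ^ 2 with hψdef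
  have hψconc : ConcaveOn ℝ Set.univ ψ := hφ
  have hψcont : Continuous ψ := hψconc.locallyLipschitz.continuous
  have hbd : Bornology.IsBounded (ψ '' Metric.ball (0 : E n) (R + 1)) := by
    refine Bornology.IsBounded.subset ?_
      (image_mono (f := ψ) Metric.ball_subset_closedBall)
    exact ((isCompact_closedBall (0 : E n) (R + 1)).image hψcont).isBounded
  obtain ⟨Kψ, hKψ⟩ :=
    (hψconc.subset (subset_univ _) (convex_ball _ _)).exists_lipschitzOnWith_of_isBounded
      (show R < R + 1 by linarith) hbd
  refine ⟨Kψ + (C * R).toNNReal, ?_⟩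
  rw [lipschitzOnWith_iff_dist_le_mul] at *
  intro x hx y hy
  have hxR : ‖x‖ < R := by simpa using hx
  have hyR : ‖y‖ < R := by simpa using hy
  have h1 : dist (ψ x) (ψ y) ≤ (Kψ : ℝ) * dist x y := hKψ x hx y hy
  have h2 : dist (C / 2 * ‖x‖ ^ 2) (C / 2 * ‖y‖ ^ 2) ≤ C * R * dist x y := by
    rw [Real.dist_eq, dist_eq_norm]
    have hnn : |‖x‖ - ‖y‖| ≤ ‖x - y‖ := abs_norm_sub_norm_le x y
    have hx0 : (0:ℝ) ≤ ‖x‖ := norm_nonneg x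
    have hy0 : (0:ℝ) ≤ ‖y‖ := norm_nonneg y
    have habs : |C / 2 * ‖x‖ ^ 2 - C / 2 * ‖y‖ ^ 2| = C / 2 * (‖x‖ + ‖y‖) * |‖x‖ - ‖y‖| := by
      rw [show C / 2 * ‖x‖ ^ 2 - C / 2 * ‖y‖ ^ 2 = (C / 2 * (‖x‖ + ‖y‖)) * (‖x‖ - ‖y‖) by ring,
        abs_mul, abs_of_nonneg (by positivity)]
    rw [habs]
    have hsum : ‖x‖ + ‖y‖ ≤ R + R := add_le_add hxR.le hyR.le
    have hmul : C / 2 * (‖x‖ + ‖y‖) * |‖x‖ - ‖y‖| ≤ C / 2 * (R + R) * ‖x - y‖ :=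
      mul_le_mul (mul_le_mul_of_nonneg_left hsum (by positivity)) hnn (abs_nonneg _)
        (by positivity)
    linarith
  have hφ_eq : ∀ z : E n, φ z = ψ z + C / 2 * ‖z‖ ^ 2 := fun z => by simp [hψdef]
  have hC' : ((C * R).toNNReal : ℝ) = C * R := Real.coe_toNNReal _ (by positivity)
  calc dist (φ x) (φ y)
      ≤ dist (ψ x) (ψ y) + dist (C / 2 * ‖x‖ ^ 2) (C / 2 * ‖y‖ ^ 2) := by
        rw [hφ_eq x, hφ_eq y, Real.dist_eq, Real.dist_eq, Real.dist_eq]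
        have := abs_add_le (ψ x - ψ y) (C / 2 * ‖x‖ ^ 2 - C / 2 * ‖y‖ ^ 2)
        calc |ψ x + C / 2 * ‖x‖ ^ 2 - (ψ y + C / 2 * ‖y‖ ^ 2)|
            = |(ψ x - ψ y) + (C / 2 * ‖x‖ ^ 2 - C / 2 * ‖y‖ ^ 2)| := by ring_nf
          _ ≤ _ := this
    _ ≤ (Kψ : ℝ) * dist x y + C * R * dist x y := add_le_add h1 h2
    _ = ((Kψ + (C * R).toNNReal : ℝ≥0) : ℝ) * dist x y := by
        push_cast [hC']; ring

/-- If `φ` is `C`-semiconcave and `γ : [0,T] → ℝⁿ` is Lipschitz, then `φ ∘ γ` is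
Lipschitz and, for a.e. `s ∈ (0,T)`, both `γ` and `φ ∘ γ` are differentiable at `s`
and `(φ∘γ)'(s) = ⟪p, γ'(s)⟫` for every `p ∈ D⁺φ(γ(s))`; in particular the latter
value is independent of the choice of `p`. -/
theorem stmt1 (C : ℝ) (hC : 0 ≤ C) (φ : E n → ℝ) (hφ : Semiconcave C φ)
    (T : ℝ) (hT : 0 < T) (γ : ℝ → E n) (K : ℝ≥0)
    (hγ : LipschitzOnWith K γ (Set.Icc 0 T)) :
    (∃ K' : ℝ≥0, LipschitzOnWith K' (φ ∘ γ) (Set.Icc 0 T)) ∧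
    ∀ᵐ s ∂(volume.restrict (Set.Ioo 0 T)), ∃ v : E n,
      HasDerivWithinAt γ v (Set.Icc 0 T) s ∧
      ∀ p ∈ superdiff φ (γ s),
        HasDerivWithinAt (φ ∘ γ) ⟪p, v⟫ (Set.Icc 0 T) s := by
  -- the image of γ is bounded
  obtain ⟨r, hr⟩ :=
    ((isCompact_Icc.image_of_continuousOn hγ.continuousOn).isBounded).subset_closedBall 0
  have hrR : γ '' Set.Icc 0 T ⊆ Metric.ball 0 (|r| + 1) := fun x hx => by
    have := hr hx
    simp only [Metric.mem_closedBall] at this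
    simp only [Metric.mem_ball]
    calc dist x 0 ≤ r := this
      _ ≤ |r| := le_abs_self r
      _ < |r| + 1 := by linarith
  obtain ⟨Kφ, hKφ⟩ := aux_lip hC hφ (show (0:ℝ) < |r| + 1 by positivity)
  have hmaps : MapsTo γ (Set.Icc 0 T) (Metric.ball 0 (|r| + 1)) := mapsTo_iff_image_subset.2 hrR
  have hcomp : LipschitzOnWith (Kφ * K) (φ ∘ γ) (Set.Icc 0 T) := hKφ.comp hγ hmaps
  refine ⟨⟨Kφ * K, hcomp⟩, ?_⟩
  -- extend γ and φ∘γ to all of ℝ by projIcc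
  set γ' : ℝ → E n := fun t => γ (projIcc 0 T hT.le t) with hγ'def
  set f' : ℝ → ℝ := fun t => φ (γ (projIcc 0 T hT.le t)) with hf'def
  have hEq : ∀ t ∈ Set.Icc 0 T, γ' t = γ t := fun t ht => by
    simp [hγ'def, projIcc_of_mem hT.le ht]
  have hγ'lip : LipschitzWith K γ' := by
    have := (lipschitzOnWith_iff_restrict.mp hγ).comp (LipschitzWith.projIcc hT.le)
    simpa [Function.comp_def] using this
  have hf'lip : LipschitzWith (Kφ * K) f' := by
    have := (lipschitzOnWith_iff_restrict.mp hcomp).comp (LipschitzWith.projIcc hT.le)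
    simpa [Function.comp_def] using this
  have hae : ∀ᵐ s ∂(volume.restrict (Set.Ioo 0 T)),
      DifferentiableAt ℝ γ' s ∧ DifferentiableAt ℝ f' s :=
    ae_restrict_of_ae ((hγ'lip.ae_differentiableAt).and (hf'lip.ae_differentiableAt))
  filter_upwards [hae, ae_restrict_mem measurableSet_Ioo] with s hs hsIoo
  have hsIcc : s ∈ Set.Icc 0 T := Ioo_subset_Icc_self hsIoo
  have hγs : γ' s = γ s := hEq s hsIcc
  set v : E n := deriv γ' s with hvdef
  have hv : HasDerivAt γ' v s := hs.1.hasDerivAt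
  refine ⟨v, (hv.hasDerivWithinAt).congr (fun t ht => (hEq t ht).symm) hγs.symm, ?_⟩
  intro p hp
  set d : ℝ := deriv f' s with hddef
  have hd : HasDerivAt f' d s := hs.2.hasDerivAt
  have hinner : HasDerivAt (fun t => ⟪p, γ' t⟫) ⟪p, v⟫ s := by
    have := HasDerivAt.inner ℝ (hasDerivAt_const s p) hv
    simpa using this
  -- the auxiliary function g
  set g : ℝ → ℝ := fun t => f' t - ⟪p, γ' t⟫ with hgdef
  have hga : HasDerivAt g (d - ⟪p, v⟫) s := hd.sub hinner
  have hzero : d - ⟪p, v⟫ = 0 := by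
    refine aux_deriv_zero hga ?_
    intro ε hε
    have hK1 : (0:ℝ) < (K : ℝ) + 1 := by positivity
    have hp' := hp (ε / ((K : ℝ) + 1)) (by positivity)
    have hcont : Tendsto γ' (𝓝 s) (𝓝 (γ s)) := by
      have := hγ'lip.continuous.continuousAt (x := s)
      rwa [ContinuousAt, hγs] at this
    filter_upwards [hcont.eventually hp'] with t ht
    have hdist : ‖γ' t - γ' s‖ ≤ (K : ℝ) * |t - s| := by
      have := hγ'lip.dist_le_mul t s
      simpa [dist_eq_norm, Real.dist_eq] using this
    have hstep : ε / ((K : ℝ) + 1) * ((K : ℝ) * |t - s|) ≤ ε * |t - s| := by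
      rw [div_mul_eq_mul_div, div_le_iff₀ hK1]
      have h0 : (0:ℝ) ≤ |t - s| := abs_nonneg _
      have h1 : (0:ℝ) ≤ (K:ℝ) := K.coe_nonneg
      nlinarith
    calc g t - g s
        = φ (γ' t) - φ (γ s) - ⟪p, γ' t - γ s⟫ := by
          show (φ (γ' t) - ⟪p, γ' t⟫) - (φ (γ' s) - ⟪p, γ' s⟫) = _
          rw [hγs, inner_sub_right]
          ring
      _ ≤ ε / ((K : ℝ) + 1) * ‖γ' t - γ s‖ := ht
      _ ≤ ε / ((K : ℝ) + 1) * ((K : ℝ) * |t - s|) := by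
          rw [← hγs]
          gcongr
      _ ≤ ε * |t - s| := hstep
  have hfinal : HasDerivAt f' ⟪p, v⟫ s := by
    have : d = ⟪p, v⟫ := by linarith [hzero]
    rwa [this] at hd
  exact (hfinal.hasDerivWithinAt).congr
    (fun t ht => by simp [Function.comp, hf'def, projIcc_of_mem hT.le ht])
    (by simp [Function.comp, hf'def, projIcc_of_mem hT.le hsIcc])

end
end

section
/- Let φ : ℝ^n → ℝ be C-semiconcave and κ-Lipschitz, let H be a Tonelli Hamiltonian with Lagrangian L, let p : ℝ^n → ℝ^n be a Borel measurable map with p(x) ∈ D⁺φ(x) for every x, and let γ : [0,T] → ℝ^n be Lipschitz. Then φ(γ(T)) − φ(γ(0)) ≤ ∫₀^T [ L(γ(s),γ'(s)) + H(γ(s), p(γ(s))) ] ds, and equality holds if and only if γ'(s) = H_p(γ(s), p(γ(s))) for almost every s ∈ [0,T]. -/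
open MeasureTheory Set Filter Topology intervalIntegral
open scoped RealInnerProductSpace NNReal

noncomputable section

variable {n : ℕ}

/-- Tonelli Hamiltonian. -/
structure IsTonelli (H : E n → E n → ℝ) : Prop where
  smooth : ContDiff ℝ 2 (fun q : E n × E n => H q.1 q.2)
  posdef : ∀ x p v : E n, v ≠ 0 → 0 < iteratedFDeriv ℝ 2 (H x) p ![v, v]
  superlinear : ∀ A : ℝ, 0 ≤ A → ∃ B : ℝ, ∀ x p, A * ‖p‖ - B ≤ H x p

/-- The Tonelli Lagrangian associated to `H` via the Fenchel transform. -/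
def Lag (H : E n → E n → ℝ) (x v : E n) : ℝ := ⨆ p : E n, (⟪p, v⟫ - H x p)

/-- Partial gradient of `H` in the momentum variable. -/
def Hp (H : E n → E n → ℝ) (x p : E n) : E n := gradient (H x) p

section Aux

lemma norm_id_aux (x z : E n) : ‖z‖^2 - ‖x‖^2 - 2*⟪x, z - x⟫ = ‖z - x‖^2 := by
  have h := @norm_sub_sq_real (E n) _ _ z x
  have h2 : ⟪x, z - x⟫ = ⟪x, z⟫ - ⟪x, x⟫ := inner_sub_right x z x
  have h3 : ⟪x, x⟫ = ‖x‖^2 := real_inner_self_eq_norm_sq x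
  have h4 : ⟪x, z⟫ = ⟪z, x⟫ := real_inner_comm z x
  linarith [h, h2, h3, h4]

lemma superdiff_norm_le {κ : ℝ≥0} {φ : E n → ℝ} (hφLip : LipschitzWith κ φ)
    {x p : E n} (hp : p ∈ superdiff φ x) : ‖p‖ ≤ κ := by
  by_contra hlt
  push_neg at hlt
  have hpne : p ≠ 0 := by
    intro h; rw [h, norm_zero] at hlt; exact absurd hlt (not_lt.2 κ.coe_nonneg)
  have hppos : 0 < ‖p‖ := norm_pos_iff.2 hpne
  set ε : ℝ := (‖p‖ - κ)/2 with hε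
  have hεpos : 0 < ε := by rw [hε]; linarith
  have := hp ε hεpos
  obtain ⟨δ, hδ, hball⟩ := Metric.eventually_nhds_iff.1 this
  set t : ℝ := δ / (2 * ‖p‖) with ht
  have htpos : 0 < t := by positivity
  set y : E n := x - t • p with hy
  have hyx : y - x = -(t • p) := by simp [hy]
  have hdist : dist y x < δ := by
    rw [dist_eq_norm, hy]
    simp only [sub_sub_cancel_left, norm_neg, norm_smul, Real.norm_eq_abs,
      abs_of_pos htpos]
    rw [ht]
    rw [div_mul_eq_mul_div, mul_comm]
    calc ‖p‖ * δ / (2 * ‖p‖) = δ/2 := by field_simp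
    _ < δ := by linarith
  have hineq := hball hdist
  rw [hyx] at hineq
  have h1 : ⟪p, -(t • p)⟫ = -(t * ‖p‖^2) := by
    rw [inner_neg_right, real_inner_smul_right, real_inner_self_eq_norm_sq]
  have h2 : ‖-(t • p)‖ = t * ‖p‖ := by
    rw [norm_neg, norm_smul, Real.norm_eq_abs, abs_of_pos htpos]
  have h3 : φ y - φ x ≥ -(κ * (t * ‖p‖)) := by
    have := hφLip.dist_le_mul y x
    rw [Real.dist_eq] at this
    have h4 : dist y x = t * ‖p‖ := by rw [dist_eq_norm, hy]; simpa using h2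
    rw [h4] at this
    have := abs_le.1 this
    linarith [this.1]
  rw [h1, h2] at hineq
  have hfin : ‖p‖ - κ ≤ ε := by
    have : t * ‖p‖ * (‖p‖ - κ) ≤ ε * (t * ‖p‖) := by nlinarith
    have hpt : 0 < t * ‖p‖ := by positivity
    nlinarith
  rw [hε] at hfin; linarith

lemma concave_superdiff_global {ψ : E n → ℝ} (hψ : ConcaveOn ℝ Set.univ ψ)
    {x q : E n} (hq : q ∈ superdiff ψ x) (y : E n) : ψ y ≤ ψ x + ⟪q, y - x⟫ := by
  rcases eq_or_ne y x with rfl | hne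
  · simp
  have hyx : 0 < ‖y - x‖ := by
    rw [norm_pos_iff, sub_ne_zero]; exact hne
  by_contra hcon
  push_neg at hcon
  set d : ℝ := ψ y - ψ x - ⟪q, y - x⟫ with hd
  have hdpos : 0 < d := by rw [hd]; linarith
  set ε : ℝ := d / (2 * ‖y - x‖) with hε
  have hεpos : 0 < ε := by positivity
  obtain ⟨δ, hδ, hball⟩ := Metric.eventually_nhds_iff.1 (hq ε hεpos)
  set t : ℝ := min (1:ℝ) (δ / (2 * ‖y - x‖)) with htdef
  have htpos : 0 < t := lt_min one_pos (by positivity)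
  have ht1 : t ≤ 1 := min_le_left _ _
  set z : E n := x + t • (y - x) with hz
  have hzx : z - x = t • (y - x) := by simp [hz]
  have hzd : dist z x < δ := by
    rw [dist_eq_norm, hzx, norm_smul, Real.norm_eq_abs, abs_of_pos htpos]
    calc t * ‖y - x‖ ≤ δ / (2 * ‖y - x‖) * ‖y - x‖ :=
          mul_le_mul_of_nonneg_right (min_le_right _ _) (norm_nonneg _)
      _ = δ / 2 := by field_simp
      _ < δ := by linarith
  have hconc : (1 - t) * ψ x + t * ψ y ≤ ψ z := by
    have h := hψ.2 (Set.mem_univ x) (Set.mem_univ y) (by linarith : (0:ℝ) ≤ 1 - t)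
      htpos.le (by ring)
    have hzz : (1 - t) • x + t • y = z := by rw [hz]; module
    rw [hzz] at h
    simpa using h
  have hineq := hball hzd
  rw [hzx] at hineq
  rw [real_inner_smul_right, norm_smul, Real.norm_eq_abs, abs_of_pos htpos] at hineq
  -- ψ z - ψ x ≤ t ⟪q, y-x⟫ + ε t ‖y-x‖
  have key : t * (ψ y - ψ x) ≤ t * ⟪q, y - x⟫ + ε * (t * ‖y - x‖) := by nlinarith
  have : ψ y - ψ x ≤ ⟪q, y - x⟫ + ε * ‖y - x‖ := by
    have := (mul_le_mul_iff_of_pos_left htpos).1 (by linarith : t * (ψ y - ψ x) ≤ t * (⟪q, y - x⟫ + ε * ‖y - x‖))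
    linarith
  have hεval : ε * ‖y - x‖ = d / 2 := by rw [hε]; field_simp
  rw [hεval] at this
  rw [hd] at *
  linarith

lemma semiconcave_superdiff_bound {C : ℝ} (hC : 0 ≤ C) {φ : E n → ℝ}
    (hφ : Semiconcave C φ) {x p : E n} (hp : p ∈ superdiff φ x) (y : E n) :
    φ y ≤ φ x + ⟪p, y - x⟫ + C/2 * ‖y - x‖^2 := by
  have hshift : (p - C • x) ∈ superdiff (fun z => φ z - C / 2 * ‖z‖ ^ 2) x := by
    intro ε hε
    filter_upwards [hp ε hε] with z hz
    have h1 : ⟪p - C • x, z - x⟫ = ⟪p, z - x⟫ - C * ⟪x, z - x⟫ := by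
      rw [inner_sub_left, real_inner_smul_left]
    have h2 : C/2 * (‖z‖^2 - ‖x‖^2 - 2*⟪x, z - x⟫) = C/2 * ‖z - x‖^2 := by
      rw [norm_id_aux x z]
    have hnn : 0 ≤ C/2 * ‖z - x‖^2 := by positivity
    show φ z - C / 2 * ‖z‖ ^ 2 - (φ x - C / 2 * ‖x‖ ^ 2) - ⟪p - C • x, z - x⟫ ≤ ε * ‖z - x‖
    linarith
  have hglob := concave_superdiff_global hφ hshift y
  have hglob' : φ y - C / 2 * ‖y‖ ^ 2 ≤ φ x - C / 2 * ‖x‖ ^ 2 + ⟪p - C • x, y - x⟫ := hglob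
  have h1 : ⟪p - C • x, y - x⟫ = ⟪p, y - x⟫ - C * ⟪x, y - x⟫ := by
    rw [inner_sub_left, real_inner_smul_left]
  have h2 : C/2 * (‖y‖^2 - ‖x‖^2 - 2*⟪x, y - x⟫) = C/2 * ‖y - x‖^2 := by
    rw [norm_id_aux x y]
  linarith [hglob']

lemma IsTonelli.contDiff_snd {H : E n → E n → ℝ} (hH : IsTonelli H) (x : E n) :
    ContDiff ℝ 2 (H x) := by
  have : (H x) = (fun q : E n × E n => H q.1 q.2) ∘ (fun p : E n => (x, p)) := rfl
  rw [this]
  exact hH.smooth.comp (contDiff_prodMk_right x)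

lemma fderiv_eq_inner_gradient {H : E n → E n → ℝ} (hH : IsTonelli H) (x p w : E n) :
    fderiv ℝ (H x) p w = ⟪gradient (H x) p, w⟫ := by
  rw [gradient]
  exact (InnerProductSpace.toDual_symm_apply).symm

lemma IsTonelli.bddAbove_fenchel {H : E n → E n → ℝ} (hH : IsTonelli H) (x v : E n) :
    BddAbove (Set.range fun q : E n => ⟪q, v⟫ - H x q) := by
  obtain ⟨B, hB⟩ := hH.superlinear ‖v‖ (norm_nonneg v)
  refine ⟨B, ?_⟩
  rintro y ⟨q, rfl⟩
  have h1 : ⟪q, v⟫ ≤ ‖q‖ * ‖v‖ := real_inner_le_norm q v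
  have h2 := hB x q
  show ⟪q, v⟫ - H x q ≤ B
  nlinarith [norm_nonneg q]

lemma le_Lag {H : E n → E n → ℝ} (hH : IsTonelli H) (x v p : E n) :
    ⟪p, v⟫ - H x p ≤ Lag H x v :=
  le_ciSup (hH.bddAbove_fenchel x v) p

lemma IsTonelli.convex_tangent {H : E n → E n → ℝ} (hH : IsTonelli H) (x p q : E n) :
    H x p + ⟪gradient (H x) p, q - p⟫ ≤ H x q := by
  rcases eq_or_ne q p with rfl | hne
  · simp
  set w : E n := q - p with hw
  have hwne : w ≠ 0 := sub_ne_zero.2 hne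
  have hsm := hH.contDiff_snd x
  have hdiff : Differentiable ℝ (H x) := hsm.differentiable two_ne_zero
  have hd1 : ContDiff ℝ 1 (fderiv ℝ (H x)) := hsm.fderiv_right (le_refl 2)
  have hdiff1 : Differentiable ℝ (fderiv ℝ (H x)) := hd1.differentiable one_ne_zero
  set ℓ : ℝ → E n := fun t => p + t • w with hℓ
  have hline : ∀ t : ℝ, HasDerivAt ℓ w t := by
    intro t
    have := ((hasDerivAt_id t).smul_const w).const_add p
    simpa [hℓ] using this
  set g' : ℝ → ℝ := fun t => fderiv ℝ (H x) (ℓ t) w with hg'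
  have hgd : ∀ t : ℝ, HasDerivAt (fun t => H x (ℓ t)) (g' t) t := by
    intro t
    exact (hdiff (ℓ t)).hasFDerivAt.comp_hasDerivAt t (hline t)
  have hg'd : ∀ t : ℝ, HasDerivAt g' (fderiv ℝ (fderiv ℝ (H x)) (ℓ t) w w) t := by
    intro t
    have h1 : HasDerivAt (fun t => fderiv ℝ (H x) (ℓ t))
        (fderiv ℝ (fderiv ℝ (H x)) (ℓ t) w) t :=
      (hdiff1 (ℓ t)).hasFDerivAt.comp_hasDerivAt t (hline t)
    have := h1.clm_apply (hasDerivAt_const t w)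
    simpa using this
  have hpos : ∀ t : ℝ, 0 < fderiv ℝ (fderiv ℝ (H x)) (ℓ t) w w := by
    intro t
    have := hH.posdef x (ℓ t) w hwne
    rwa [iteratedFDeriv_two_apply, show (![w, w] : Fin 2 → E n) 0 = w from rfl,
      show (![w, w] : Fin 2 → E n) 1 = w from rfl] at this
  have hmono : StrictMono g' := by
    apply strictMono_of_deriv_pos
    intro t
    rw [(hg'd t).deriv]
    exact hpos t
  have hcont : ContinuousOn (fun t => H x (ℓ t)) (Set.Icc 0 1) :=
    (Continuous.comp hsm.continuous (by continuity)).continuousOn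
  obtain ⟨c, hc, hceq⟩ := exists_hasDerivAt_eq_slope (fun t => H x (ℓ t)) g'
    (by norm_num : (0:ℝ) < 1) hcont (fun t _ => hgd t)
  have h0 : ℓ 0 = p := by simp [hℓ]
  have h1 : ℓ 1 = q := by simp [hℓ, hw]
  have hg'0 : g' 0 = ⟪gradient (H x) p, w⟫ := by
    show fderiv ℝ (H x) (ℓ 0) w = _
    rw [h0, fderiv_eq_inner_gradient hH]
  have hle : g' 0 ≤ g' c := hmono.monotone hc.1.le
  rw [h0, h1] at hceq
  rw [hceq] at hle
  rw [hg'0] at hle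
  have : ⟪gradient (H x) p, q - p⟫ ≤ H x q - H x p := by
    rw [← hw]; linarith
  linarith

lemma Lag_eq_iff {H : E n → E n → ℝ} (hH : IsTonelli H) (x p v : E n) :
    ⟪p, v⟫ - H x p = Lag H x v ↔ v = Hp H x p := by
  constructor
  · intro heq
    have hdiff : Differentiable ℝ (H x) := (hH.contDiff_snd x).differentiable two_ne_zero
    set J : E n → ℝ := fun q => ⟪v, q⟫ - H x q with hJ
    have hJq : ∀ q : E n, J q = ⟪q, v⟫ - H x q := by
      intro q; show ⟪v, q⟫ - H x q = _; rw [real_inner_comm]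
    have hmax : IsLocalMax J p := by
      apply IsMaxOn.isLocalMax (s := Set.univ) _ Filter.univ_mem
      intro q _
      show J q ≤ J p
      rw [hJq q, hJq p, heq]
      exact le_Lag hH x v q
    have hJd : HasFDerivAt J ((innerSL ℝ v : E n →L[ℝ] ℝ) - fderiv ℝ (H x) p) p :=
      HasFDerivAt.sub (innerSL ℝ v).hasFDerivAt (hdiff p).hasFDerivAt
    have h0 := hmax.hasFDerivAt_eq_zero hJd
    apply ext_inner_right (𝕜 := ℝ)
    intro w
    have := congrArg (fun L : E n →L[ℝ] ℝ => L w) h0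
    simp only [ContinuousLinearMap.sub_apply, ContinuousLinearMap.zero_apply,
      innerSL_apply_apply] at this
    have h2 := fderiv_eq_inner_gradient hH x p w
    rw [Hp]
    have h3 : ⟪v, w⟫ = fderiv ℝ (H x) p w := by linarith
    rw [h3, h2]
  · intro hv
    apply le_antisymm (le_Lag hH x v p)
    apply ciSup_le
    intro q
    have := hH.convex_tangent x p q
    rw [← Hp, ← hv] at this
    have h1 : ⟪q, v⟫ - ⟪p, v⟫ = ⟪v, q - p⟫ := by
      rw [inner_sub_right]
      rw [real_inner_comm q v, real_inner_comm p v]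
    linarith

lemma IsTonelli.continuousH {H : E n → E n → ℝ} (hH : IsTonelli H) :
    Continuous (fun q : E n × E n => H q.1 q.2) := hH.smooth.continuous

lemma Lag_eq_iSup_seq {H : E n → E n → ℝ} (hH : IsTonelli H) (x v : E n) :
    Lag H x v = ⨆ k : ℕ, (⟪TopologicalSpace.denseSeq (E n) k, v⟫
      - H x (TopologicalSpace.denseSeq (E n) k)) := by
  set u := TopologicalSpace.denseSeq (E n) with hu
  have hbdd := hH.bddAbove_fenchel x v
  have hbdd2 : BddAbove (Set.range fun k : ℕ => ⟪u k, v⟫ - H x (u k)) := by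
    apply hbdd.mono
    rintro y ⟨k, rfl⟩
    exact ⟨u k, rfl⟩
  apply le_antisymm
  · apply ciSup_le
    intro q
    set S := ⨆ k : ℕ, (⟪u k, v⟫ - H x (u k)) with hS
    have hcl : IsClosed {z : E n | ⟪z, v⟫ - H x z ≤ S} := by
      apply isClosed_le _ continuous_const
      have h1 : Continuous fun z : E n => ⟪z, v⟫ := continuous_id.inner continuous_const
      have h2 : Continuous (H x) := by
        have : (H x) = (fun q : E n × E n => H q.1 q.2) ∘ (fun p : E n => (x, p)) := rfl
        rw [this]; exact hH.continuousH.comp (Continuous.prodMk_right x)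
      exact h1.sub h2
    have hrange : Set.range u ⊆ {z : E n | ⟪z, v⟫ - H x z ≤ S} := by
      rintro y ⟨k, rfl⟩
      exact le_ciSup hbdd2 k
    have hdense : Dense (Set.range u) := TopologicalSpace.denseRange_denseSeq (E n)
    have : (Set.univ : Set (E n)) ⊆ {z : E n | ⟪z, v⟫ - H x z ≤ S} := by
      rw [← hcl.closure_eq]
      intro z _
      exact closure_mono hrange (hdense z)
    exact this (Set.mem_univ q)
  · apply ciSup_le
    intro k
    exact le_ciSup hbdd (u k)

lemma measurable_Lag_comp {H : E n → E n → ℝ} (hH : IsTonelli H)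
    {α : Type*} [MeasurableSpace α] {X V : α → E n}
    (hX : Measurable X) (hV : Measurable V) :
    Measurable (fun a => Lag H (X a) (V a)) := by
  have : (fun a => Lag H (X a) (V a))
      = fun a => ⨆ k : ℕ, (⟪TopologicalSpace.denseSeq (E n) k, V a⟫
        - H (X a) (TopologicalSpace.denseSeq (E n) k)) := by
    funext a; exact Lag_eq_iSup_seq hH (X a) (V a)
  rw [this]
  apply Measurable.iSup
  intro k
  apply Measurable.sub
  · exact Measurable.inner measurable_const hV
  · have : (fun a => H (X a) (TopologicalSpace.denseSeq (E n) k))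
        = (fun q : E n × E n => H q.1 q.2) ∘ (fun a => (X a, TopologicalSpace.denseSeq (E n) k)) := rfl
    rw [this]
    exact hH.continuousH.measurable.comp (hX.prodMk measurable_const)

lemma Lag_le_bound {H : E n → E n → ℝ} (hH : IsTonelli H) (R : ℝ) (hR : 0 ≤ R) :
    ∃ B : ℝ, ∀ x v : E n, ‖v‖ ≤ R → Lag H x v ≤ B := by
  obtain ⟨B, hB⟩ := hH.superlinear R hR
  refine ⟨B, fun x v hv => ?_⟩
  apply ciSup_le
  intro q
  have h1 : ⟪q, v⟫ ≤ ‖q‖ * ‖v‖ := real_inner_le_norm q v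
  have h2 := hB x q
  nlinarith [norm_nonneg q, mul_le_mul_of_nonneg_left hv (norm_nonneg q)]

lemma neg_le_Lag {H : E n → E n → ℝ} (hH : IsTonelli H) (x v : E n) :
    - H x 0 ≤ Lag H x v := by
  have := le_ciSup (hH.bddAbove_fenchel x v) (0 : E n)
  simpa [Lag] using this

lemma norm_hasDerivAt_le_of_lip {K : ℝ≥0} {F : Type*} [NormedAddCommGroup F]
    [NormedSpace ℝ F] {u : ℝ → F} (hu : LipschitzWith K u) {s : ℝ} {v : F}
    (hd : HasDerivAt u v s) : ‖v‖ ≤ K := by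
  have h1 : HasFDerivAt u (ContinuousLinearMap.smulRight (1 : ℝ →L[ℝ] ℝ) v) s := hd
  have h2 := h1.le_of_lipschitz hu
  have h3 : v = (ContinuousLinearMap.smulRight (1 : ℝ →L[ℝ] ℝ) v) 1 := by simp
  rw [h3]
  calc ‖(ContinuousLinearMap.smulRight (1 : ℝ →L[ℝ] ℝ) v) 1‖
      ≤ ‖ContinuousLinearMap.smulRight (1 : ℝ →L[ℝ] ℝ) v‖ * ‖(1:ℝ)‖ :=
        ContinuousLinearMap.le_opNorm _ _
    _ ≤ K * 1 := by rw [norm_one]; exact mul_le_mul_of_nonneg_right h2 zero_le_one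
    _ = K := mul_one _

lemma chain_deriv {C : ℝ} (hC : 0 ≤ C) {φ : E n → ℝ} (hφ : Semiconcave C φ)
    {g : ℝ → E n} {s : ℝ} {v : E n} (hg : HasDerivAt g v s)
    {d : ℝ} (hd : HasDerivAt (fun t => φ (g t)) d s)
    {p : E n} (hp : p ∈ superdiff φ (g s)) : d = ⟪p, v⟫ := by
  set F : ℝ → ℝ := fun h =>
    φ (g (s + h)) - φ (g s) - ⟪p, g (s + h) - g s⟫ - C/2 * ⟪g (s + h) - g s, g (s + h) - g s⟫
    with hF
  have hmax : ∀ h, F h ≤ 0 := by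
    intro h
    have := semiconcave_superdiff_bound hC hφ hp (g (s + h))
    have hin : ⟪g (s+h) - g s, g (s+h) - g s⟫ = ‖g (s+h) - g s‖^2 :=
      real_inner_self_eq_norm_sq _
    rw [hF]; dsimp only; rw [hin]; linarith
  have hF0 : F 0 = 0 := by rw [hF]; simp
  have hloc : IsLocalMax F 0 := by
    apply IsMaxOn.isLocalMax (s := Set.univ)
    · intro y _; rw [hF0]; exact hmax y
    · exact Filter.univ_mem
  -- derivative of F at 0
  have hadd : HasDerivAt (fun h : ℝ => s + h) 1 0 := by
    simpa using (hasDerivAt_id (0:ℝ)).const_add s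
  have hG : HasDerivAt (fun h : ℝ => g (s + h)) v 0 := by
    have := HasDerivAt.scomp (0:ℝ) (by simpa using hg) hadd
    simpa [Function.comp_def] using this
  have hGsub : HasDerivAt (fun h : ℝ => g (s + h) - g s) v 0 :=
    hG.sub_const (g s)
  have hφg : HasDerivAt (fun h : ℝ => φ (g (s + h))) d 0 := by
    have := HasDerivAt.scomp (0:ℝ) (by simpa using hd) hadd
    simpa [Function.comp_def] using this
  have hinner : HasDerivAt (fun h : ℝ => ⟪p, g (s + h) - g s⟫) ⟪p, v⟫ 0 := by
    have := (hasDerivAt_const (0:ℝ) p).inner ℝ hGsub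
    simpa using this
  have hsq : HasDerivAt (fun h : ℝ => ⟪g (s+h) - g s, g (s+h) - g s⟫) 0 0 := by
    have := hGsub.inner ℝ hGsub
    simpa using this
  have hFd : HasDerivAt F (d - ⟪p, v⟫) 0 := by
    have h1 := ((hφg.sub_const (φ (g s))).sub hinner).sub ((hsq.const_mul (C/2)))
    have h2 : HasDerivAt F (d - ⟪p, v⟫ - C/2 * 0) 0 := h1
    simpa using h2
  have := hloc.deriv_eq_zero
  rw [hFd.deriv] at this
  linarith

lemma lipschitz_ftc {M : ℝ≥0} {f : ℝ → ℝ} (hf : LipschitzWith M f) (T : ℝ) (hT : 0 < T) :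
    ∫ s in (0:ℝ)..T, deriv f s = f T - f 0 := by
  have hcont : Continuous f := hf.continuous
  set F : ℝ → ℝ := fun y => ∫ t in (0:ℝ)..y, f t with hFdef
  have hF : ∀ y : ℝ, HasDerivAt F (f y) y := fun y =>
    (hcont.integral_hasStrictDerivAt 0 y).hasDerivAt
  set h : ℕ → ℝ := fun k => 1/(k+1) with hh
  have hhpos : ∀ k, 0 < h k := fun k => by positivity
  have hh0 : Tendsto h atTop (𝓝 0) := tendsto_one_div_add_atTop_nhds_zero_nat
  set G : ℕ → ℝ → ℝ := fun k s => (f (s + h k) - f s) / h k with hG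
  -- step 1 : integral of G k
  have step1 : ∀ k, ∫ s in (0:ℝ)..T, G k s
      = (F (T + h k) - F T)/(h k) - (F (0 + h k) - F 0)/(h k) := by
    intro k
    have hint1 : IntervalIntegrable (fun s => f (s + h k)) volume 0 T :=
      (hcont.comp (by continuity)).intervalIntegrable _ _
    have hint2 : IntervalIntegrable f volume 0 T := hcont.intervalIntegrable _ _
    have : ∫ s in (0:ℝ)..T, G k s
        = (∫ s in (0:ℝ)..T, (f (s + h k) - f s)) / h k := by
      rw [hG]
      simp only [div_eq_mul_inv]
      rw [← intervalIntegral.integral_mul_const]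
    rw [this, intervalIntegral.integral_sub hint1 hint2,
      intervalIntegral.integral_comp_add_right f (h k)]
    have hsplit1 : ∫ x in (0:ℝ) + h k..T + h k, f x
        = F (T + h k) - F (0 + h k) := by
      rw [hFdef]
      dsimp only
      rw [intervalIntegral.integral_interval_sub_left]
      · exact hcont.intervalIntegrable _ _
      · exact hcont.intervalIntegrable _ _
    have hFT : (∫ x in (0:ℝ)..T, f x) = F T - F 0 := by
      rw [hFdef]; dsimp only; simp
    rw [hsplit1, hFT]
    ring
  -- step 2 : convergence of the right-hand side
  have slope_tendsto : ∀ (u : ℝ → ℝ) (y c : ℝ), HasDerivAt u c y →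
      Tendsto (fun k => (u (y + h k) - u y)/(h k)) atTop (𝓝 c) := by
    intro u y c hu
    have hs := hasDerivAt_iff_tendsto_slope.1 hu
    have hseq : Tendsto (fun k => y + h k) atTop (𝓝[≠] y) := by
      apply tendsto_nhdsWithin_of_tendsto_nhds_of_eventually_within
      · simpa using (tendsto_const_nhds.add hh0)
      · filter_upwards with k
        simp only [Set.mem_compl_iff, Set.mem_singleton_iff]
        have := hhpos k; intro hcon; nlinarith [congrArg (fun z => z - y) hcon]
    have := hs.comp hseq
    convert this using 1
    funext k
    simp only [Function.comp_apply, slope_def_field, add_sub_cancel_left]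
  have step2 : Tendsto (fun k => (F (T + h k) - F T)/(h k) - (F (0 + h k) - F 0)/(h k))
      atTop (𝓝 (f T - f 0)) :=
    (slope_tendsto F T (f T) (hF T)).sub (slope_tendsto F 0 (f 0) (hF 0))
  -- step 3 : dominated convergence
  have hae : ∀ᵐ s ∂(volume : Measure ℝ), DifferentiableAt ℝ f s :=
    hf.ae_differentiableAt
  have step3 : Tendsto (fun k => ∫ s in (0:ℝ)..T, G k s) atTop
      (𝓝 (∫ s in (0:ℝ)..T, deriv f s)) := by
    apply intervalIntegral.tendsto_integral_filter_of_dominated_convergence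
      (fun _ => (M : ℝ))
    · filter_upwards with k
      exact ((hcont.comp (by continuity)).sub hcont).div_const (h k)
        |>.aestronglyMeasurable
    · filter_upwards with k
      filter_upwards with s _
      rw [hG]
      dsimp only
      rw [Real.norm_eq_abs, abs_div, abs_of_pos (hhpos k)]
      rw [div_le_iff₀ (hhpos k)]
      have := hf.dist_le_mul (s + h k) s
      rw [Real.dist_eq, Real.dist_eq] at this
      calc |f (s + h k) - f s| ≤ M * |s + h k - s| := this
        _ = M * h k := by rw [add_sub_cancel_left, abs_of_pos (hhpos k)]
    · exact intervalIntegrable_const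
    · filter_upwards [hae] with s hs _
      have hds : HasDerivAt f (deriv f s) s := hs.hasDerivAt
      exact slope_tendsto f s (deriv f s) hds
  exact tendsto_nhds_unique (by simpa only [step1] using step3 : Tendsto _ atTop _) step2


end Aux

/-- Fundamental energy inequality for a measurable selection `p` of `D⁺φ` along a
Lipschitz curve `γ`, with equality iff `γ' = H_p(γ, p(γ))` a.e. -/
theorem stmt3 (C : ℝ) (hC : 0 ≤ C) (κ : ℝ≥0) (φ : E n → ℝ)
    (hφ : Semiconcave C φ) (hφLip : LipschitzWith κ φ)
    (H : E n → E n → ℝ) (hH : IsTonelli H)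
    (pSel : E n → E n) (hmeas : Measurable pSel) (hsel : ∀ x, pSel x ∈ superdiff φ x)
    (T : ℝ) (hT : 0 < T) (γ : ℝ → E n) (K : ℝ≥0)
    (hγ : LipschitzOnWith K γ (Set.Icc 0 T)) :
    (φ (γ T) - φ (γ 0) ≤
      ∫ s in (0:ℝ)..T,
        (Lag H (γ s) (derivWithin γ (Set.Icc 0 T) s) + H (γ s) (pSel (γ s)))) ∧
    ((φ (γ T) - φ (γ 0) =
      ∫ s in (0:ℝ)..T,
        (Lag H (γ s) (derivWithin γ (Set.Icc 0 T) s) + H (γ s) (pSel (γ s)))) ↔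
      ∀ᵐ s ∂(volume.restrict (Set.Icc 0 T)),
        derivWithin γ (Set.Icc 0 T) s = Hp H (γ s) (pSel (γ s))) := by
  have hT' : (0:ℝ) ≤ T := hT.le
  have hpSel_norm : ∀ x, ‖pSel x‖ ≤ κ := fun x => superdiff_norm_le hφLip (hsel x)
  -- the Lipschitz extension of the curve
  set γt : ℝ → E n := fun s => (Set.Icc (0:ℝ) T).restrict γ (Set.projIcc 0 T hT' s)
    with hγtdef
  have hγtlip : LipschitzWith K γt := by
    have := (hγ.to_restrict).comp (LipschitzWith.projIcc hT')
    rw [mul_one] at this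
    exact this
  have hγteq : ∀ s ∈ Set.Icc (0:ℝ) T, γt s = γ s := by
    intro s hs
    simp [hγtdef, Set.projIcc_of_mem hT' hs]
    rfl
  have hγtT : γt T = γ T := hγteq T (Set.right_mem_Icc.2 hT')
  have hγt0 : γt 0 = γ 0 := hγteq 0 (Set.left_mem_Icc.2 hT')
  have hγtrange : ∀ s : ℝ, γt s ∈ γ '' (Set.Icc 0 T) := by
    intro s
    exact ⟨(Set.projIcc 0 T hT' s : ℝ), (Set.projIcc 0 T hT' s).2, rfl⟩
  -- the composed function
  have hflip : LipschitzWith (κ * K) (fun s => φ (γt s)) := hφLip.comp hγtlip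
  set f : ℝ → ℝ := fun s => φ (γt s) with hfdef
  set g : ℝ → E n := deriv γt with hgdef
  have hgmeas : Measurable g := measurable_deriv γt
  have hγtmeas : Measurable γt := hγtlip.continuous.measurable
  have hPmeas : Measurable (fun s => pSel (γt s)) := hmeas.comp hγtmeas
  -- a.e. facts
  have aeγ : ∀ᵐ s : ℝ, DifferentiableAt ℝ γt s := hγtlip.ae_differentiableAt
  have aef : ∀ᵐ s : ℝ, DifferentiableAt ℝ f s := hflip.ae_differentiableAt
  have aekey : ∀ᵐ s : ℝ, HasDerivAt γt (g s) s ∧ deriv f s = ⟪pSel (γt s), g s⟫ := by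
    filter_upwards [aeγ, aef] with s h1 h2
    have hdγ : HasDerivAt γt (g s) s := h1.hasDerivAt
    have hdf : HasDerivAt f (deriv f s) s := h2.hasDerivAt
    exact ⟨hdγ, chain_deriv hC hφ hdγ hdf (hsel (γt s))⟩
  have hFTC : ∫ s in (0:ℝ)..T, deriv f s = f T - f 0 := lipschitz_ftc hflip T hT
  -- bound on the velocity
  have hgbd : ∀ᵐ s : ℝ, ‖g s‖ ≤ K := by
    filter_upwards [aekey] with s hs
    exact norm_hasDerivAt_le_of_lip hγtlip hs.1
  -- the two integrands
  set W : ℝ → ℝ := fun s => Lag H (γt s) (g s) + H (γt s) (pSel (γt s)) with hWdef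
  set I1f : ℝ → ℝ := fun s => ⟪pSel (γt s), g s⟫ with hI1def
  have hHmeas : Measurable (fun s => H (γt s) (pSel (γt s))) := by
    have : (fun s => H (γt s) (pSel (γt s)))
        = (fun q : E n × E n => H q.1 q.2) ∘ (fun s => (γt s, pSel (γt s))) := rfl
    rw [this]
    exact hH.continuousH.measurable.comp (hγtmeas.prodMk hPmeas)
  have hWmeas : Measurable W :=
    (measurable_Lag_comp hH hγtmeas hgmeas).add hHmeas
  have hI1meas : Measurable I1f := hPmeas.inner hgmeas
  -- pointwise Fenchel inequality
  have hptwise : ∀ s, I1f s ≤ W s := by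
    intro s
    have := le_Lag hH (γt s) (g s) (pSel (γt s))
    rw [hWdef, hI1def]
    dsimp only
    linarith
  -- bounds
  obtain ⟨BL, hBL⟩ := Lag_le_bound hH K K.coe_nonneg
  have hcpt : IsCompact ((γ '' Set.Icc 0 T) ×ˢ Metric.closedBall (0:E n) κ) := by
    apply IsCompact.prod
    · exact (isCompact_Icc).image_of_continuousOn hγ.continuousOn
    · exact isCompact_closedBall _ _
  obtain ⟨MH, hMH⟩ := hcpt.exists_bound_of_continuousOn hH.continuousH.continuousOn
  have hmemP : ∀ s : ℝ, (γt s, pSel (γt s)) ∈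
      (γ '' Set.Icc 0 T) ×ˢ Metric.closedBall (0:E n) κ := by
    intro s
    refine ⟨hγtrange s, ?_⟩
    rw [Metric.mem_closedBall, dist_zero_right]
    exact hpSel_norm _
  have hmem0 : ∀ s : ℝ, (γt s, (0:E n)) ∈
      (γ '' Set.Icc 0 T) ×ˢ Metric.closedBall (0:E n) κ := by
    intro s
    exact ⟨hγtrange s, by simp⟩
  have hMHnn : 0 ≤ MH := le_trans (norm_nonneg _) (hMH _ (hmem0 0))
  have hHbd : ∀ s : ℝ, |H (γt s) (pSel (γt s))| ≤ MH := fun s => hMH _ (hmemP s)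
  have hLagbd : ∀ᵐ s : ℝ, |Lag H (γt s) (g s)| ≤ |BL| + MH := by
    filter_upwards [hgbd] with s hs
    rw [abs_le]
    constructor
    · have h1 := neg_le_Lag hH (γt s) (g s)
      have h2 : |H (γt s) (0:E n)| ≤ MH := hMH _ (hmem0 s)
      rw [abs_le] at h2
      have : 0 ≤ |BL| := abs_nonneg _
      linarith [h2.2]
    · have := hBL (γt s) (g s) hs
      have h3 : BL ≤ |BL| := le_abs_self _
      linarith
  -- integrability
  have hI1int : IntervalIntegrable I1f volume 0 T := by
    rw [intervalIntegrable_iff_integrableOn_Ioc_of_le hT']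
    apply Integrable.mono' (integrable_const ((κ:ℝ) * K))
      hI1meas.aestronglyMeasurable
    apply ae_restrict_of_ae
    filter_upwards [hgbd] with s hs
    rw [hI1def]
    dsimp only
    rw [Real.norm_eq_abs]
    calc |⟪pSel (γt s), g s⟫| ≤ ‖pSel (γt s)‖ * ‖g s‖ := abs_real_inner_le_norm _ _
      _ ≤ (κ:ℝ) * K := by
          apply mul_le_mul (hpSel_norm _) hs (norm_nonneg _) κ.coe_nonneg
  have hWint : IntervalIntegrable W volume 0 T := by
    rw [intervalIntegrable_iff_integrableOn_Ioc_of_le hT']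
    apply Integrable.mono' (integrable_const ((|BL| + MH) + MH))
      hWmeas.aestronglyMeasurable
    apply ae_restrict_of_ae
    filter_upwards [hLagbd] with s hs
    rw [hWdef]
    dsimp only
    rw [Real.norm_eq_abs]
    calc |Lag H (γt s) (g s) + H (γt s) (pSel (γt s))|
        ≤ |Lag H (γt s) (g s)| + |H (γt s) (pSel (γt s))| := abs_add_le _ _
      _ ≤ (|BL| + MH) + MH := add_le_add hs (hHbd s)
  -- the basic identity : φ(γ T) - φ(γ 0) = ∫ I1f
  have hI1eq : ∫ s in (0:ℝ)..T, deriv f s = ∫ s in (0:ℝ)..T, I1f s := by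
    apply intervalIntegral.integral_congr_ae
    filter_upwards [aekey] with s hs _
    exact hs.2
  have hφγ : φ (γ T) - φ (γ 0) = ∫ s in (0:ℝ)..T, I1f s := by
    rw [← hI1eq, hFTC, hfdef]
    dsimp only
    rw [hγtT, hγt0]
  -- a.e. identification of derivWithin γ with g on Ioc
  have hDW : ∀ᵐ s : ℝ, s ∈ Set.Ioc (0:ℝ) T →
      (derivWithin γ (Set.Icc 0 T) s = g s ∧ γ s = γt s) := by
    have hne : ∀ᵐ s : ℝ, s ≠ T := by
      have : (volume : Measure ℝ) {T} = 0 := measure_singleton T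
      exact measure_mono_null (fun s hs => by simpa using hs) this
    filter_upwards [aekey, hne] with s hs hsne hsIoc
    have hsIcc : s ∈ Set.Icc (0:ℝ) T := Set.Ioc_subset_Icc_self hsIoc
    have hsIoo : s ∈ Set.Ioo (0:ℝ) T := ⟨hsIoc.1, lt_of_le_of_ne hsIoc.2 hsne⟩
    constructor
    · have h1 : HasDerivWithinAt γt (g s) (Set.Icc 0 T) s := hs.1.hasDerivWithinAt
      have h2 : HasDerivWithinAt γ (g s) (Set.Icc 0 T) s := by
        apply h1.congr
        · intro y hy; exact (hγteq y hy).symm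
        · exact (hγteq s hsIcc).symm
      exact h2.derivWithin (uniqueDiffOn_Icc hT s hsIcc)
    · exact (hγteq s hsIcc).symm
  -- rewrite the statement's integral
  have hstmtW : (∫ s in (0:ℝ)..T,
      (Lag H (γ s) (derivWithin γ (Set.Icc 0 T) s) + H (γ s) (pSel (γ s))))
      = ∫ s in (0:ℝ)..T, W s := by
    apply intervalIntegral.integral_congr_ae
    rw [Set.uIoc_of_le hT']
    filter_upwards [hDW] with s hs hsIoc
    obtain ⟨h1, h2⟩ := hs hsIoc
    rw [hWdef]
    dsimp only
    rw [h1, h2]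
  constructor
  · rw [hstmtW, hφγ]
    exact intervalIntegral.integral_mono_on hT' hI1int hWint (fun s _ => hptwise s)
  · -- equality case
    rw [hstmtW, hφγ]
    have hres : volume.restrict (Set.Icc (0:ℝ) T) = volume.restrict (Set.Ioc 0 T) :=
      (Measure.restrict_congr_set Ioc_ae_eq_Icc).symm
    rw [hres]
    -- convert to a set integral statement
    have hIocI1 : Integrable I1f (volume.restrict (Set.Ioc 0 T)) := by
      rw [← IntegrableOn, ← intervalIntegrable_iff_integrableOn_Ioc_of_le hT']
      exact hI1int
    have hIocW : Integrable W (volume.restrict (Set.Ioc 0 T)) := by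
      rw [← IntegrableOn, ← intervalIntegrable_iff_integrableOn_Ioc_of_le hT']
      exact hWint
    have hsub : Integrable (fun s => W s - I1f s) (volume.restrict (Set.Ioc 0 T)) :=
      hIocW.sub hIocI1
    have keyiff : (∫ s in (0:ℝ)..T, I1f s) = (∫ s in (0:ℝ)..T, W s)
        ↔ (fun s => W s - I1f s) =ᵐ[volume.restrict (Set.Ioc 0 T)] 0 := by
      rw [← sub_eq_zero]
      have : (∫ s in (0:ℝ)..T, W s) - (∫ s in (0:ℝ)..T, I1f s)
          = ∫ s in Set.Ioc (0:ℝ) T, (W s - I1f s) := by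
        rw [← intervalIntegral.integral_sub hWint hI1int,
          intervalIntegral.integral_of_le hT']
      rw [show ((∫ s in (0:ℝ)..T, I1f s) - (∫ s in (0:ℝ)..T, W s) = 0)
          ↔ ((∫ s in (0:ℝ)..T, W s) - (∫ s in (0:ℝ)..T, I1f s) = 0) by
        constructor <;> intro h <;> linarith]
      rw [this]
      rw [MeasureTheory.integral_eq_zero_iff_of_nonneg_ae]
      · apply ae_restrict_of_ae
        filter_upwards with s
        have := hptwise s
        simp only [Pi.zero_apply]
        linarith
      · exact hsub
    rw [keyiff]
    -- now the final equivalence with the Hp condition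
    have haeIoc : ∀ᵐ s ∂(volume.restrict (Set.Ioc (0:ℝ) T)),
        s ∈ Set.Ioc (0:ℝ) T → (derivWithin γ (Set.Icc 0 T) s = g s ∧ γ s = γt s) :=
      ae_restrict_of_ae hDW
    have hmemIoc : ∀ᵐ s ∂(volume.restrict (Set.Ioc (0:ℝ) T)), s ∈ Set.Ioc (0:ℝ) T :=
      ae_restrict_mem measurableSet_Ioc
    constructor
    · intro h
      filter_upwards [h, haeIoc, hmemIoc] with s hs h2 h3
      obtain ⟨hd, hγe⟩ := h2 h3
      have hzero : W s - I1f s = 0 := hs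
      have : ⟪pSel (γt s), g s⟫ - H (γt s) (pSel (γt s)) = Lag H (γt s) (g s) := by
        rw [hWdef, hI1def] at hzero
        dsimp only at hzero
        linarith
      have := (Lag_eq_iff hH (γt s) (pSel (γt s)) (g s)).1 this
      rw [hd, hγe]
      exact this
    · intro h
      filter_upwards [h, haeIoc, hmemIoc] with s hs h2 h3
      obtain ⟨hd, hγe⟩ := h2 h3
      rw [hd, hγe] at hs
      have := (Lag_eq_iff hH (γt s) (pSel (γt s)) (g s)).2 hs
      show W s - I1f s = 0
      rw [hWdef, hI1def]
      dsimp only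
      linarith


end
end

section
/- Let φ : ℝ^n → ℝ be C-semiconcave and let H be a Tonelli Hamiltonian. Then for every x ∈ ℝ^n the function p ↦ H(x,p) attains a unique minimum p♯(x) over the nonempty compact convex set D⁺φ(x); the map x ↦ p♯(x) is Borel measurable; and the function x ↦ H(x, p♯(x)) is lower semicontinuous on ℝ^n. -/
open MeasureTheory Set Filter Topology
open scoped RealInnerProductSpace NNReal

noncomputable section

variable {n : ℕ}

/-- `ps` is the minimal energy selection of `D⁺φ` for the pair `(φ, H)`. -/
def MinSel (φ : E n → ℝ) (H : E n → E n → ℝ) (ps : E n → E n) : Prop :=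
  ∀ x, ps x ∈ superdiff φ x ∧ ∀ q ∈ superdiff φ x, H x (ps x) ≤ H x q

namespace Stmt5


def S (C : ℝ) (φ : E n → ℝ) (x : E n) : Set (E n) :=
  {p | ∀ y, φ y ≤ φ x + ⟪p, y - x⟫ + C / 2 * ‖y - x‖ ^ 2}

lemma cont (C : ℝ) (φ : E n → ℝ) (hφ : Semiconcave C φ) : Continuous φ := by
  have h1 : ContinuousOn (fun x : E n => φ x - C / 2 * ‖x‖ ^ 2) univ :=
    ConcaveOn.continuousOn isOpen_univ hφ
  have h2 : Continuous fun x : E n => φ x - C / 2 * ‖x‖ ^ 2 :=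
    continuousOn_univ.mp h1
  have : Continuous fun x : E n => (φ x - C / 2 * ‖x‖ ^ 2) + C / 2 * ‖x‖ ^ 2 :=
    h2.add (by continuity)
  simpa using this

-- norm identity
lemma norm_combo (x y : E n) (a b : ℝ) (hab : a + b = 1) :
    a * ‖x‖ ^ 2 + b * ‖y‖ ^ 2 - ‖a • x + b • y‖ ^ 2 = a * b * ‖x - y‖ ^ 2 := by
  have hx : ⟪x, x⟫ = ‖x‖ ^ 2 := real_inner_self_eq_norm_sq x
  have hy : ⟪y, y⟫ = ‖y‖ ^ 2 := real_inner_self_eq_norm_sq y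
  have h1 : ‖a • x + b • y‖ ^ 2 = ⟪a • x + b • y, a • x + b • y⟫ :=
    (real_inner_self_eq_norm_sq _).symm
  have h2 : ‖x - y‖ ^ 2 = ⟪x - y, x - y⟫ := (real_inner_self_eq_norm_sq _).symm
  rw [h1, h2]
  simp only [inner_add_add_self, inner_sub_sub_self, real_inner_smul_left,
    real_inner_smul_right]
  rw [real_inner_comm y x, hx, hy]
  linear_combination (-(a * ‖x‖ ^ 2 + b * ‖y‖ ^ 2)) * hab

lemma norm_sq_expand (x y : E n) :
    ‖y‖ ^ 2 - ‖x‖ ^ 2 - 2 * ⟪x, y - x⟫ = ‖y - x‖ ^ 2 := by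
  have h2 : ‖y - x‖ ^ 2 = ⟪y - x, y - x⟫ := (real_inner_self_eq_norm_sq _).symm
  rw [h2, inner_sub_sub_self, inner_sub_right,
    real_inner_self_eq_norm_sq, real_inner_self_eq_norm_sq]
  ring_nf
  rw [real_inner_comm]
  ring






lemma S_subset_superdiff (C : ℝ) (hC : 0 ≤ C) (φ : E n → ℝ) (x : E n) :
    S C φ x ⊆ superdiff φ x := by
  intro p hp ε hε
  have hδ : (0:ℝ) < 2 * ε / (C + 1) := by positivity
  filter_upwards [Metric.ball_mem_nhds x hδ] with y hy
  have h1 := hp y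
  have h2 : ‖y - x‖ < 2 * ε / (C + 1) := by
    rw [Metric.mem_ball, dist_eq_norm] at hy; exact hy
  have h3 : (0:ℝ) ≤ ‖y - x‖ := norm_nonneg _
  have h4 : C / 2 * ‖y - x‖ ^ 2 ≤ ε * ‖y - x‖ := by
    have : C / 2 * ‖y - x‖ ≤ ε := by
      rw [div_mul_eq_mul_div, div_le_iff₀ (by norm_num : (0:ℝ) < 2)]
      calc C * ‖y - x‖ ≤ C * (2 * ε / (C + 1)) := by
            apply mul_le_mul_of_nonneg_left h2.le hC
        _ ≤ ε * 2 := by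
            rw [mul_comm, div_mul_eq_mul_div, div_le_iff₀ (by linarith : (0:ℝ) < C + 1)]
            nlinarith
    nlinarith
  linarith

lemma superdiff_subset_S (C : ℝ) (hC : 0 ≤ C) (φ : E n → ℝ) (hφ : Semiconcave C φ)
    (x : E n) : superdiff φ x ⊆ S C φ x := by
  intro p hp y
  rcases eq_or_ne y x with rfl | hyx
  · simp
  have hny : (0:ℝ) < ‖y - x‖ := by
    rw [norm_pos_iff, sub_ne_zero]; exact hyx
  -- suffices to show for all ε > 0
  have key : ∀ ε > (0:ℝ), φ y ≤ φ x + ⟪p, y - x⟫ + C / 2 * ‖y - x‖ ^ 2 + ε := by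
    intro ε hε
    have hε' : (0:ℝ) < ε / ‖y - x‖ := by positivity
    have hev := hp (ε / ‖y - x‖) hε'
    -- find t ∈ (0,1) with x + t • (y - x) in the eventual set
    have htend : Tendsto (fun t : ℝ => x + t • (y - x)) (𝓝[>] (0:ℝ)) (𝓝 x) := by
      have : Tendsto (fun t : ℝ => x + t • (y - x)) (𝓝 (0:ℝ)) (𝓝 (x + (0:ℝ) • (y - x))) := by
        apply Tendsto.const_add
        exact (tendsto_id.smul_const (y - x))
      simp only [zero_smul, add_zero] at this
      exact this.mono_left nhdsWithin_le_nhds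
    have hev2 := htend.eventually hev
    have hsmall : ∀ᶠ t in 𝓝[>] (0:ℝ), t < 1 := by
      apply eventually_nhdsWithin_of_eventually_nhds
      exact Filter.Tendsto.eventually_lt_const (by norm_num) tendsto_id
    rcases ((hev2.and hsmall).and self_mem_nhdsWithin).exists with ⟨t, ⟨h1, h2⟩, h3⟩
    have ht0 : (0:ℝ) < t := h3
    have ht1 : t < 1 := h2
    -- concavity
    have hcc := hφ.2 (mem_univ x) (mem_univ y) (by linarith : (0:ℝ) ≤ 1 - t)
      (le_of_lt ht0) (by ring)
    have hco : (1 - t) • x + t • y = x + t • (y - x) := by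
      rw [smul_sub]; module
    rw [hco] at hcc
    simp only [smul_eq_mul] at hcc
    have hid := norm_combo x y (1 - t) t (by ring)
    rw [hco] at hid
    -- from superdiff
    have hin : ⟪p, x + t • (y - x) - x⟫ = t * ⟪p, y - x⟫ := by
      rw [add_sub_cancel_left, real_inner_smul_right]
    have hnn : ‖x + t • (y - x) - x‖ = t * ‖y - x‖ := by
      rw [add_sub_cancel_left, norm_smul, Real.norm_eq_abs, abs_of_pos ht0]
    rw [hin, hnn] at h1
    -- combine
    have hxy : ‖x - y‖ = ‖y - x‖ := norm_sub_rev x y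
    rw [hxy] at hid
    have hfin : t * (φ y - φ x) - C / 2 * (t * (1 - t)) * ‖y - x‖ ^ 2
        ≤ t * ⟪p, y - x⟫ + ε / ‖y - x‖ * (t * ‖y - x‖) := by nlinarith
    have hdiv : φ y - φ x - C / 2 * (1 - t) * ‖y - x‖ ^ 2
        ≤ ⟪p, y - x⟫ + ε := by
      have hε2 : ε / ‖y - x‖ * ‖y - x‖ = ε := div_mul_cancel₀ ε (ne_of_gt hny)
      have := (mul_le_mul_iff_right₀ ht0).mp (by nlinarith : t * (φ y - φ x - C / 2 * (1 - t) * ‖y - x‖ ^ 2) ≤ t * (⟪p, y - x⟫ + ε))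
      linarith
    have hle : C / 2 * (1 - t) * ‖y - x‖ ^ 2 ≤ C / 2 * ‖y - x‖ ^ 2 := by
      nlinarith [mul_nonneg (mul_nonneg hC ht0.le) (sq_nonneg ‖y - x‖)]
    linarith
  by_contra hcon
  push_neg at hcon
  rcases key ((φ y - (φ x + ⟪p, y - x⟫ + C / 2 * ‖y - x‖ ^ 2)) / 2) (by linarith) with h
  linarith






lemma S_convex (C : ℝ) (φ : E n → ℝ) (x : E n) : Convex ℝ (S C φ x) := by
  intro p hp q hq a b ha hb hab
  intro y
  have h1 := hp y
  have h2 := hq y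
  have hin : ⟪a • p + b • q, y - x⟫ = a * ⟪p, y - x⟫ + b * ⟪q, y - x⟫ := by
    rw [inner_add_left, real_inner_smul_left, real_inner_smul_left]
  rw [hin]
  have hsum := add_le_add (mul_le_mul_of_nonneg_left h1 ha) (mul_le_mul_of_nonneg_left h2 hb)
  have key : a * (φ x + ⟪p, y - x⟫ + C / 2 * ‖y - x‖ ^ 2)
      + b * (φ x + ⟪q, y - x⟫ + C / 2 * ‖y - x‖ ^ 2)
      = φ x + (a * ⟪p, y - x⟫ + b * ⟪q, y - x⟫) + C / 2 * ‖y - x‖ ^ 2 := by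
    linear_combination (φ x + C / 2 * ‖y - x‖ ^ 2) * hab
  have key2 : a * φ y + b * φ y = φ y := by linear_combination (φ y) * hab
  linarith

lemma graph_closed (C : ℝ) (φ : E n → ℝ) (hφ : Semiconcave C φ) :
    IsClosed {z : E n × E n | z.2 ∈ S C φ z.1} := by
  have hcont := cont C φ hφ
  have : {z : E n × E n | z.2 ∈ S C φ z.1} =
      ⋂ y, {z : E n × E n | φ y ≤ φ z.1 + ⟪z.2, y - z.1⟫ + C / 2 * ‖y - z.1‖ ^ 2} := by
    ext z; simp [S]
  rw [this]
  refine isClosed_iInter fun y => isClosed_le continuous_const ?_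
  have h1 : Continuous fun z : E n × E n => φ z.1 := hcont.comp continuous_fst
  have h2 : Continuous fun z : E n × E n => ⟪z.2, y - z.1⟫ :=
    continuous_snd.inner (continuous_const.sub continuous_fst)
  have h3 : Continuous fun z : E n × E n => C / 2 * ‖y - z.1‖ ^ 2 := by
    apply continuous_const.mul
    exact ((continuous_const.sub continuous_fst).norm.pow 2)
  exact (h1.add h2).add h3

lemma S_closed (C : ℝ) (φ : E n → ℝ) (hφ : Semiconcave C φ) (x : E n) :
    IsClosed (S C φ x) := by
  have := (graph_closed C φ hφ).preimage
    (continuous_const.prodMk continuous_id : Continuous fun p : E n => (x, p))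
  exact this

lemma S_bound (C : ℝ) (hC : 0 ≤ C) (φ : E n → ℝ) (hφ : Semiconcave C φ) (x : E n) (r : ℝ)
    (hr : 0 ≤ r) :
    ∃ R : ℝ, 0 ≤ R ∧ ∀ y ∈ Metric.closedBall x r, ∀ p ∈ S C φ y, ‖p‖ ≤ R := by
  have hcont := cont C φ hφ
  obtain ⟨zM, hzMm, hzM⟩ := (isCompact_closedBall x (r + 1)).exists_isMaxOn
    (Metric.nonempty_closedBall.mpr (by linarith)) hcont.continuousOn
  obtain ⟨zm, hzmm, hzm⟩ := (isCompact_closedBall x (r + 1)).exists_isMinOn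
    (Metric.nonempty_closedBall.mpr (by linarith)) hcont.continuousOn
  have h0 : φ zm ≤ φ zM := hzm hzMm
  refine ⟨φ zM - φ zm + C / 2, by linarith, ?_⟩
  intro y hy p hp
  rcases eq_or_ne p 0 with rfl | hp0
  · simp; linarith
  have hnp : (0:ℝ) < ‖p‖ := norm_pos_iff.mpr hp0
  set z := y - ‖p‖⁻¹ • p with hz
  have hzy : ‖z - y‖ = 1 := by
    rw [hz]
    simp only [sub_sub_cancel_left, norm_neg]
    rw [norm_smul, Real.norm_eq_abs, abs_of_pos (inv_pos.mpr hnp), inv_mul_cancel₀ (ne_of_gt hnp)]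
  have hzmem : z ∈ Metric.closedBall x (r + 1) := by
    have h1 : dist z x ≤ dist z y + dist y x := dist_triangle z y x
    have h2 : dist z y = 1 := by rw [dist_eq_norm, hzy]
    have h3 : dist y x ≤ r := Metric.mem_closedBall.mp hy
    exact Metric.mem_closedBall.mpr (by linarith)
  have hymem : y ∈ Metric.closedBall x (r + 1) := by
    have h3 : dist y x ≤ r := Metric.mem_closedBall.mp hy
    exact Metric.mem_closedBall.mpr (by linarith)
  have hineq := hp z
  have hinn : ⟪p, z - y⟫ = -‖p‖ := by
    rw [hz]
    simp only [sub_sub_cancel_left]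
    rw [inner_neg_right, real_inner_smul_right, real_inner_self_eq_norm_sq]
    field_simp
  have hn2 : ‖z - y‖ ^ 2 = 1 := by rw [hzy]; norm_num
  rw [hinn, hn2] at hineq
  have hle1 : φ z ≥ φ zm := hzm hzmem
  have hle2 : φ y ≤ φ zM := hzM hymem
  linarith








lemma S_nonempty (C : ℝ) (hC : 0 ≤ C) (φ : E n → ℝ) (hφ : Semiconcave C φ) (x : E n) :
    (S C φ x).Nonempty := by
  set g : E n → ℝ := fun z => φ z - C / 2 * ‖z‖ ^ 2 with hg
  have hgc : ConcaveOn ℝ univ g := hφ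
  have hgcont : Continuous g := by
    have := cont C φ hφ
    exact this.sub (by continuity)
  -- strict hypograph is open and convex
  set T : Set (E n × ℝ) := {q | q.2 < g q.1} with hT
  have hTo : IsOpen T := isOpen_lt continuous_snd (hgcont.comp continuous_fst)
  have hTc : Convex ℝ T := by
    have := hgc.convex_strict_hypograph
    simpa [hT] using this
  have hxT : (x, g x) ∉ T := by simp [hT]
  obtain ⟨f, hf⟩ := geometric_hahn_banach_point_open hTc hTo hxT
  -- decompose f
  set c : ℝ := f (0, 1) with hc
  set L : E n → ℝ := fun z => f (z, 0) with hL
  have hdecomp : ∀ z : E n, ∀ t : ℝ, f (z, t) = L z + t * c := by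
    intro z t
    have : (z, t) = (z, (0:ℝ)) + t • ((0:E n), (1:ℝ)) := by
      simp [Prod.ext_iff]
    rw [this, f.map_add, f.map_smul]
    simp [hL, hc, smul_eq_mul]
  -- c < 0
  have hcneg : c < 0 := by
    have h1 := hf (x, g x - 1) (by simp [hT])
    rw [hdecomp x (g x), hdecomp x (g x - 1)] at h1
    nlinarith
  -- key inequality: ∀ y, g y ≤ g x + (L x - L y)/(-c) ... derive direct form
  have hkey : ∀ y : E n, L x + c * g x ≤ L y + c * g y := by
    intro y
    have h2 : ∀ ε > (0:ℝ), L x + c * g x ≤ L y + c * g y + (-c) * ε := by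
      intro ε hε
      have h1 := hf (y, g y - ε) (by simp [hT]; linarith)
      rw [hdecomp x (g x), hdecomp y (g y - ε)] at h1
      nlinarith
    have h3 : ∀ ε > (0:ℝ), L x + c * g x ≤ (L y + c * g y) + ε := by
      intro ε hε
      have hcpos : (0:ℝ) < -c := by linarith
      have := h2 (ε / (-c)) (div_pos hε hcpos)
      have hcc : (-c) * (ε / (-c)) = ε := by
        rw [mul_comm, div_mul_cancel₀ ε (ne_of_gt hcpos)]
      linarith [hcc ▸ this]
    exact le_of_forall_pos_le_add h3
  -- convert L to inner product
  set q : E n := (-c)⁻¹ • ((InnerProductSpace.toDual ℝ (E n)).symm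
    (f.comp (ContinuousLinearMap.inl ℝ (E n) ℝ))) with hq
  have hqL : ∀ z : E n, ⟪q, z⟫ = (-c)⁻¹ * L z := by
    intro z
    rw [hq, real_inner_smul_left]
    congr 1
    rw [InnerProductSpace.toDual_symm_apply]
    simp [hL, ContinuousLinearMap.inl]
  -- final: p := q + C • x works
  refine ⟨q + C • x, fun y => ?_⟩
  have hgy := hkey y
  have hcpos : (0:ℝ) < -c := by linarith
  have hgineq : g y ≤ g x + ⟪q, y - x⟫ := by
    rw [inner_sub_right, hqL y, hqL x]
    have h6 : g y - g x ≤ (L y - L x) / (-c) := (le_div_iff₀ hcpos).mpr (by linarith)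
    have h7 : (L y - L x) / (-c) = (-c)⁻¹ * L y - (-c)⁻¹ * L x := by ring
    linarith
  have hexp := norm_sq_expand x y
  have hexp2 : C / 2 * ‖y‖ ^ 2 - C / 2 * ‖x‖ ^ 2 - C * ⟪x, y - x⟫ = C / 2 * ‖y - x‖ ^ 2 := by
    linear_combination (C / 2) * hexp
  have hin2 : ⟪q + C • x, y - x⟫ = ⟪q, y - x⟫ + C * ⟪x, y - x⟫ := by
    rw [inner_add_left]
    congr 1
    exact real_inner_smul_left x (y - x) C
  rw [hin2]
  simp only [hg] at hgineq
  linarith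



lemma Hx_contDiff {H : E n → E n → ℝ} (hH : IsTonelli H) (x : E n) :
    ContDiff ℝ 2 (H x) := by
  have : (H x) = (fun q : E n × E n => H q.1 q.2) ∘ (fun p => (x, p)) := rfl
  rw [this]
  exact hH.smooth.comp (contDiff_const.prodMk contDiff_id)

lemma H_strict_mid {H : E n → E n → ℝ} (hH : IsTonelli H) (x : E n) {p q : E n}
    (hpq : p ≠ q) :
    H x ((1/2 : ℝ) • p + (1/2 : ℝ) • q) < (1/2) * H x p + (1/2) * H x q := by
  have hHx := Hx_contDiff hH x
  set v : E n := q - p with hv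
  have hv0 : v ≠ 0 := sub_ne_zero.mpr (Ne.symm hpq)
  set γ : ℝ → E n := fun t => p + t • v with hγ
  set ψ : ℝ → ℝ := fun t => H x (γ t) with hψ
  set F1 : E n → (E n →L[ℝ] ℝ) := fderiv ℝ (H x) with hF1
  have hF1c : ContDiff ℝ 1 F1 := hHx.fderiv_right (by norm_num)
  have hγd : ∀ t : ℝ, HasDerivAt γ v t := by
    intro t
    simpa [hγ] using ((hasDerivAt_id t).smul_const v).const_add p
  have hd1 : ∀ t : ℝ, HasDerivAt ψ (F1 (γ t) v) t := by
    intro t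
    have h1 : HasFDerivAt (H x) (F1 (γ t)) (γ t) :=
      (hHx.differentiable (by norm_num)).differentiableAt.hasFDerivAt
    exact h1.comp_hasDerivAt t (hγd t)
  have hderiv1 : deriv ψ = fun t => F1 (γ t) v := funext fun t => (hd1 t).deriv
  have hd2 : ∀ t : ℝ, HasDerivAt (fun s => F1 (γ s) v)
      ((fderiv ℝ F1 (γ t)) v v) t := by
    intro t
    have h1 : HasFDerivAt F1 (fderiv ℝ F1 (γ t)) (γ t) :=
      (hF1c.differentiable (by norm_num)).differentiableAt.hasFDerivAt
    have h2 : HasDerivAt (fun s => F1 (γ s)) ((fderiv ℝ F1 (γ t)) v) t :=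
      h1.comp_hasDerivAt t (hγd t)
    have h3 := h2.clm_apply (hasDerivAt_const t v)
    simpa using h3
  have hiter : ∀ z : E n, (fderiv ℝ F1 z) v v = iteratedFDeriv ℝ 2 (H x) z ![v, v] := by
    intro z
    rw [iteratedFDeriv_two_apply]
    simp [hF1]
  have hψ2 : ∀ t : ℝ, 0 < deriv^[2] ψ t := by
    intro t
    have hit : deriv^[2] ψ t = deriv (deriv ψ) t := by
      rw [Function.iterate_succ, Function.iterate_one]; rfl
    rw [hit, hderiv1, (hd2 t).deriv, hiter (γ t)]
    exact hH.posdef x (γ t) v hv0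
  have hψc : Continuous ψ := hHx.continuous.comp (by continuity)
  have hsc : StrictConvexOn ℝ univ ψ :=
    strictConvexOn_of_deriv2_pos' convex_univ hψc.continuousOn fun t _ => hψ2 t
  have h01 : (0:ℝ) ≠ 1 := by norm_num
  have key := hsc.2 (mem_univ (0:ℝ)) (mem_univ (1:ℝ)) h01
    (by norm_num : (0:ℝ) < 1/2) (by norm_num : (0:ℝ) < 1/2) (by norm_num)
  have e1 : ψ 0 = H x p := by simp [hψ, hγ]
  have e2 : ψ 1 = H x q := by simp [hψ, hγ, hv]
  have e3 : (1/2 : ℝ) • (0:ℝ) + (1/2 : ℝ) • (1:ℝ) = (1/2 : ℝ) := by norm_num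
  rw [e3] at key
  have e4 : ψ (1/2) = H x ((1/2 : ℝ) • p + (1/2 : ℝ) • q) := by
    simp only [hψ, hγ, hv]
    congr 1
    module
  rw [e4, e1, e2] at key
  simpa [smul_eq_mul] using key





lemma S_compact (C : ℝ) (hC : 0 ≤ C) (φ : E n → ℝ) (hφ : Semiconcave C φ) (x : E n) :
    IsCompact (S C φ x) := by
  obtain ⟨R, hR0, hR⟩ := S_bound C hC φ hφ x 0 le_rfl
  refine (isCompact_closedBall (0 : E n) R).of_isClosed_subset (S_closed C φ hφ x) ?_
  intro p hp
  rw [Metric.mem_closedBall, dist_zero_right]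
  exact hR x (Metric.mem_closedBall_self le_rfl) p hp

lemma H_cont {H : E n → E n → ℝ} (hH : IsTonelli H) :
    Continuous fun q : E n × E n => H q.1 q.2 := hH.smooth.continuous

lemma unique_min (C : ℝ) (hC : 0 ≤ C) (φ : E n → ℝ) (hφ : Semiconcave C φ)
    {H : E n → E n → ℝ} (hH : IsTonelli H) (x : E n) :
    ∃! p : E n, p ∈ S C φ x ∧ ∀ q ∈ S C φ x, H x p ≤ H x q := by
  have hcomp := S_compact C hC φ hφ x
  have hne := S_nonempty C hC φ hφ x
  have hcont : ContinuousOn (H x) (S C φ x) := by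
    have : Continuous (H x) := (H_cont hH).comp (continuous_const.prodMk continuous_id)
    exact this.continuousOn
  obtain ⟨p₀, hp₀m, hp₀⟩ := hcomp.exists_isMinOn hne hcont
  refine ⟨p₀, ⟨hp₀m, fun q hq => hp₀ hq⟩, ?_⟩
  rintro q ⟨hqm, hqmin⟩
  by_contra hne'
  have hmid : (1/2 : ℝ) • q + (1/2 : ℝ) • p₀ ∈ S C φ x :=
    S_convex C φ x hqm hp₀m (by norm_num) (by norm_num) (by norm_num)
  have h1 := H_strict_mid hH x hne'  -- q ≠ p₀
  have h2 : H x q ≤ H x ((1/2 : ℝ) • q + (1/2 : ℝ) • p₀) := hqmin _ hmid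
  have h3 : H x p₀ ≤ H x q := hp₀ hqm
  have h4 : H x q ≤ H x p₀ := hqmin _ hp₀m
  linarith

-- cluster point lemma
lemma cluster (C : ℝ) (hC : 0 ≤ C) (φ : E n → ℝ) (hφ : Semiconcave C φ)
    (x : E n) (u : ℕ → E n) (pu : ℕ → E n)
    (hu : Tendsto u atTop (𝓝 x)) (hpu : ∀ k, pu k ∈ S C φ (u k)) :
    ∃ p ∈ S C φ x, ∃ σ : ℕ → ℕ, StrictMono σ ∧ Tendsto (pu ∘ σ) atTop (𝓝 p) := by
  have hbr : Bornology.IsBounded (Set.range u) := Metric.isBounded_range_of_tendsto u hu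
  obtain ⟨r, hr⟩ := hbr.subset_closedBall x
  have hr0 : 0 ≤ max r 0 := le_max_right r 0
  obtain ⟨R, hR0, hR⟩ := S_bound C hC φ hφ x (max r 0) hr0
  have hmem : ∀ k, u k ∈ Metric.closedBall x (max r 0) := by
    intro k
    exact Metric.closedBall_subset_closedBall (le_max_left r 0) (hr (mem_range_self k))
  have hpb : ∀ k, pu k ∈ Metric.closedBall (0 : E n) R := by
    intro k
    rw [Metric.mem_closedBall, dist_zero_right]
    exact hR (u k) (hmem k) (pu k) (hpu k)
  obtain ⟨p, hpcl, σ, hσ, hconv⟩ :=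
    tendsto_subseq_of_bounded Metric.isBounded_closedBall hpb
  refine ⟨p, ?_, σ, hσ, hconv⟩
  intro y
  have hlim : Tendsto (fun j => φ (u (σ j)) + ⟪pu (σ j), y - u (σ j)⟫
      + C / 2 * ‖y - u (σ j)‖ ^ 2) atTop
      (𝓝 (φ x + ⟪p, y - x⟫ + C / 2 * ‖y - x‖ ^ 2)) := by
    have huσ : Tendsto (fun j => u (σ j)) atTop (𝓝 x) :=
      hu.comp hσ.tendsto_atTop
    have h1 : Tendsto (fun j => φ (u (σ j))) atTop (𝓝 (φ x)) :=
      ((cont C φ hφ).tendsto x).comp huσ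
    have h2 : Tendsto (fun j => (inner ℝ ((pu ∘ σ) j) (y - u (σ j)) : ℝ)) atTop
        (𝓝 (inner ℝ p (y - x))) := hconv.inner (tendsto_const_nhds.sub huσ)
    have h3 : Tendsto (fun j => C / 2 * ‖y - u (σ j)‖ ^ 2) atTop
        (𝓝 (C / 2 * ‖y - x‖ ^ 2)) := by
      apply Tendsto.const_mul
      exact (((tendsto_const_nhds.sub huσ).norm).pow 2)
    exact (h1.add h2).add h3
  refine le_of_tendsto_of_tendsto tendsto_const_nhds hlim ?_
  filter_upwards with j
  exact hpu (σ j) y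






section Part2

variable (C : ℝ) (hC : 0 ≤ C) (φ : E n → ℝ) (hφ : Semiconcave C φ)
  (H : E n → E n → ℝ) (hH : IsTonelli H) (ps : E n → E n)
  (hps : ∀ x, ps x ∈ S C φ x ∧ ∀ q ∈ S C φ x, H x (ps x) ≤ H x q)

include hC hφ hH hps in
lemma lsc_m :
    LowerSemicontinuous (fun x => H x (ps x)) := by
  intro x y hy
  by_contra h
  rw [Filter.not_eventually] at h
  obtain ⟨u, hu, hmu⟩ := exists_seq_forall_of_frequently
    (h.mono fun z hz => not_lt.mp hz)
  obtain ⟨p, hpS, σ, hσ, hconv⟩ := cluster C hC φ hφ x u (fun k => ps (u k)) hu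
    (fun k => (hps (u k)).1)
  have hm : H x (ps x) ≤ H x p := (hps x).2 p hpS
  have huσ : Tendsto (fun j => u (σ j)) atTop (𝓝 x) := hu.comp hσ.tendsto_atTop
  have hlim : Tendsto (fun j => H (u (σ j)) (ps (u (σ j)))) atTop (𝓝 (H x p)) := by
    have : Tendsto (fun j => ((u (σ j)), ps (u (σ j)))) atTop (𝓝 (x, p)) :=
      huσ.prodMk_nhds hconv
    exact (hH.smooth.continuous.tendsto (x, p)).comp this
  have hle : H x p ≤ y := le_of_tendsto hlim (Filter.Eventually.of_forall fun j => hmu (σ j))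
  linarith

variable (F : Set (E n)) (hF : IsClosed F)

def NF : Set (E n) := {x | (S C φ x ∩ F).Nonempty}

include hC hφ hF in
lemma NF_closed : IsClosed (NF C φ F) := by
  apply IsSeqClosed.isClosed
  intro u x hus hux
  choose pu hpu using hus
  obtain ⟨p, hpS, σ, hσ, hconv⟩ := cluster C hC φ hφ x u pu hux
    (fun k => (hpu k).1)
  refine ⟨p, hpS, ?_⟩
  exact hF.mem_of_tendsto hconv (Filter.Eventually.of_forall fun j => (hpu (σ j)).2)

include hC hφ hH hF in
lemma mF_attained (x : E n) (hx : x ∈ NF C φ F) :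
    ∃ p ∈ S C φ x ∩ F, (∀ q ∈ S C φ x ∩ F, H x p ≤ H x q) ∧
      sInf (H x '' (S C φ x ∩ F)) = H x p := by
  have hcomp : IsCompact (S C φ x ∩ F) := (S_compact C hC φ hφ x).inter_right hF
  have hcont : ContinuousOn (H x) (S C φ x ∩ F) :=
    ((hH.smooth.continuous.comp (continuous_const.prodMk continuous_id)
      : Continuous (H x))).continuousOn
  obtain ⟨p, hpm, hpmin⟩ := hcomp.exists_isMinOn hx hcont
  refine ⟨p, hpm, fun q hq => hpmin hq, ?_⟩
  apply IsLeast.csInf_eq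
  exact ⟨mem_image_of_mem _ hpm, by rintro _ ⟨q, hq, rfl⟩; exact hpmin hq⟩

def mF : E n → ℝ := fun x => sInf (H x '' (S C φ x ∩ F))

include hC hφ hH hF in
lemma mF_lsc_sub :
    LowerSemicontinuous (fun z : (NF C φ F) => mF C φ H F z.val) := by
  intro z y hy
  by_contra h
  rw [Filter.not_eventually] at h
  obtain ⟨w, hw, hmw⟩ := exists_seq_forall_of_frequently
    (h.mono fun z' hz' => not_lt.mp hz')
  set u : ℕ → E n := fun k => (w k).val with hu
  have hux : Tendsto u atTop (𝓝 z.val) :=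
    ((continuous_subtype_val.tendsto z).comp hw)
  have hchoice : ∀ k, ∃ p ∈ S C φ (u k) ∩ F, (∀ q ∈ S C φ (u k) ∩ F, H (u k) p ≤ H (u k) q) ∧
      sInf (H (u k) '' (S C φ (u k) ∩ F)) = H (u k) p :=
    fun k => mF_attained C hC φ hφ H hH F hF (u k) (w k).2
  choose pu hpu1 hpu2 hpu3 using hchoice
  obtain ⟨p, hpS, σ, hσ, hconv⟩ := cluster C hC φ hφ z.val u pu hux
    (fun k => (hpu1 k).1)
  have hpF : p ∈ F :=
    hF.mem_of_tendsto hconv (Filter.Eventually.of_forall fun j => (hpu1 (σ j)).2)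
  -- mF z ≤ H z p
  obtain ⟨p₀, hp₀m, hp₀min, hp₀eq⟩ := mF_attained C hC φ hφ H hH F hF z.val z.2
  have hm : mF C φ H F z.val ≤ H z.val p := by
    rw [mF, hp₀eq]; exact hp₀min p ⟨hpS, hpF⟩
  have huσ : Tendsto (fun j => u (σ j)) atTop (𝓝 z.val) := hux.comp hσ.tendsto_atTop
  have hlim : Tendsto (fun j => H (u (σ j)) (pu (σ j))) atTop (𝓝 (H z.val p)) := by
    have : Tendsto (fun j => ((u (σ j)), pu (σ j))) atTop (𝓝 (z.val, p)) :=
      huσ.prodMk_nhds hconv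
    exact (hH.smooth.continuous.tendsto (z.val, p)).comp this
  have hle : H z.val p ≤ y := by
    apply le_of_tendsto hlim
    apply Filter.Eventually.of_forall
    intro j
    have := hmw (σ j)
    rw [mF] at this
    rw [← hpu3 (σ j)]
    exact this
  linarith

include hC hφ hH hps in
lemma ps_measurable : Measurable ps := by
  apply measurable_of_isClosed
  intro F hF
  have hNmeas : MeasurableSet (NF C φ F) := (NF_closed C hC φ hφ F hF).measurableSet
  have hkey : ps ⁻¹' F = Subtype.val ''
      {z : (NF C φ F) | mF C φ H F z.val ≤ H z.val (ps z.val)} := by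
    ext x
    constructor
    · intro hx
      have hxN : x ∈ NF C φ F := ⟨ps x, (hps x).1, hx⟩
      refine ⟨⟨x, hxN⟩, ?_, rfl⟩
      obtain ⟨p₀, hp₀m, hp₀min, hp₀eq⟩ := mF_attained C hC φ hφ H hH F hF x hxN
      show mF C φ H F x ≤ H x (ps x)
      rw [mF, hp₀eq]
      exact hp₀min (ps x) ⟨(hps x).1, hx⟩
    · rintro ⟨⟨z, hzN⟩, hz, rfl⟩
      simp only [mem_setOf_eq] at hz
      obtain ⟨p₀, hp₀m, hp₀min, hp₀eq⟩ := mF_attained C hC φ hφ H hH F hF z hzN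
      rw [mF, hp₀eq] at hz
      have h1 : H z (ps z) ≤ H z p₀ := (hps z).2 p₀ hp₀m.1
      have heq : H z p₀ = H z (ps z) := le_antisymm hz h1
      -- p₀ is a minimizer over S, so p₀ = ps z
      have hex := unique_min C hC φ hφ hH z
      have h2 : p₀ = ps z := by
        apply hex.unique
        · exact ⟨hp₀m.1, fun q hq => heq ▸ (hps z).2 q hq⟩
        · exact ⟨(hps z).1, (hps z).2⟩
      show ps z ∈ F
      rw [← h2]
      exact hp₀m.2
  rw [hkey]
  apply (MeasurableEmbedding.subtype_coe hNmeas).measurableSet_image.mpr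
  apply measurableSet_le
  · exact ((mF_lsc_sub C hC φ hφ H hH F hF).measurable)
  · exact ((lsc_m C hC φ hφ H hH ps hps).measurable).comp measurable_subtype_coe

end Part2
end Stmt5

/-- For a semiconcave `φ` and a Tonelli `H`, the superdifferential is a nonempty
compact convex set over which `H(x,·)` attains a unique minimum; the minimal energy
selection is Borel measurable and `x ↦ H(x, p♯(x))` is lower semicontinuous. -/
theorem stmt5 (C : ℝ) (hC : 0 ≤ C) (φ : E n → ℝ) (hφ : Semiconcave C φ)
    (H : E n → E n → ℝ) (hH : IsTonelli H) :
    (∀ x : E n, (superdiff φ x).Nonempty ∧ IsCompact (superdiff φ x) ∧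
      Convex ℝ (superdiff φ x) ∧
      ∃! p : E n, p ∈ superdiff φ x ∧ ∀ q ∈ superdiff φ x, H x p ≤ H x q) ∧
    ∀ ps : E n → E n, MinSel φ H ps →
      Measurable ps ∧ LowerSemicontinuous (fun x => H x (ps x)) := by

  classical
  have hsd : ∀ x : E n, superdiff φ x = Stmt5.S C φ x := fun x =>
    Set.Subset.antisymm (Stmt5.superdiff_subset_S C hC φ hφ x)
      (Stmt5.S_subset_superdiff C hC φ x)
  constructor
  · intro x
    rw [hsd x]
    exact ⟨Stmt5.S_nonempty C hC φ hφ x, Stmt5.S_compact C hC φ hφ x,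
      Stmt5.S_convex C φ x, Stmt5.unique_min C hC φ hφ hH x⟩
  · intro ps hps
    have hps' : ∀ x, ps x ∈ Stmt5.S C φ x ∧ ∀ q ∈ Stmt5.S C φ x, H x (ps x) ≤ H x q := by
      intro x
      have := hps x
      rwa [hsd x] at this
    exact ⟨Stmt5.ps_measurable C hC φ hφ H hH ps hps',
      Stmt5.lsc_m C hC φ hφ H hH ps hps'⟩

end
end

section
/- Let φ : ℝ^n → ℝ be C-semiconcave and κ-Lipschitz, H a Tonelli Hamiltonian, and let γ : [0,T] → ℝ^n be a strict singular characteristic for (φ,H). Then for every t ∈ [0,T), lim_{τ→t⁺} (1/(τ−t)) ∫_t^τ H(γ(s), p♯(γ(s))) ds = H(γ(t), p♯(γ(t))); that is, every t ∈ [0,T) is a right Lebesgue point of s ↦ H(γ(s), p♯(γ(s))). -/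
open MeasureTheory Set Filter Topology intervalIntegral
open scoped RealInnerProductSpace NNReal

noncomputable section

variable {n : ℕ}

/-! ### Auxiliary lemmas -/

/-- For a `C`-semiconcave function, the superdifferential admits a global
characterization. -/
lemma superdiff_global {C : ℝ} (hC : 0 ≤ C) {φ : E n → ℝ} (hφ : Semiconcave C φ)
    {x p : E n} : p ∈ superdiff φ x ↔ ∀ y, φ y - φ x - ⟪p, y - x⟫ ≤ C / 2 * ‖y - x‖ ^ 2 := by
  constructor
  · intro hp y
    by_cases hyx : y = x
    · simp [hyx]
    have hv : y - x ≠ 0 := sub_ne_zero.2 hyx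
    set v := y - x with hvdef
    have hvpos : 0 < ‖v‖ := norm_pos_iff.2 hv
    have key : ∀ ε > (0:ℝ), φ y - φ x - ⟪p, v⟫ - C / 2 * ‖v‖ ^ 2 ≤ ε * ‖v‖ := by
      intro ε hε
      have hev := hp ε hε
      have hc : Tendsto (fun s : ℝ => x + s • v) (𝓝[>] (0:ℝ)) (𝓝 x) := by
        have : Tendsto (fun s : ℝ => x + s • v) (𝓝 (0:ℝ)) (𝓝 (x + (0:ℝ) • v)) := by
          exact (continuous_const.add (continuous_id.smul continuous_const)).tendsto 0
        simpa using this.mono_left nhdsWithin_le_nhds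
      have ev2 : ∀ᶠ s in 𝓝[>] (0:ℝ),
          φ (x + s • v) - φ x - ⟪p, (x + s • v) - x⟫ ≤ ε * ‖(x + s • v) - x‖ :=
        hc.eventually hev
      have ev3 : ∀ᶠ s in 𝓝[>] (0:ℝ), s ∈ Ioc (0:ℝ) 1 := Ioc_mem_nhdsGT_of_mem (by norm_num)
      obtain ⟨s, hs1, hs2⟩ := (ev2.and ev3).exists
      obtain ⟨hs0, hs01⟩ := hs2
      have hcv := hφ.2 (mem_univ x) (mem_univ y) (by linarith : (0:ℝ) ≤ 1 - s) hs0.le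
        (by ring : (1 - s) + s = 1)
      have hpt : (1 - s) • x + s • y = x + s • v := by
        rw [hvdef]; module
      rw [hpt] at hcv
      simp only [smul_eq_mul] at hcv
      have hss : (x + s • v) - x = s • v := by abel
      rw [hss] at hs1
      have hinner : ⟪p, s • v⟫ = s * ⟪p, v⟫ := real_inner_smul_right p v s
      have hnorm : ‖s • v‖ = s * ‖v‖ := by
        rw [norm_smul, Real.norm_eq_abs, abs_of_pos hs0]
      have h1 : ‖x + s • v‖ ^ 2 = ‖x‖ ^ 2 + 2 * (s * ⟪x, v⟫) + s ^ 2 * ‖v‖ ^ 2 := by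
        rw [norm_add_sq_real, real_inner_smul_right, hnorm]; ring
      have h2 : ‖y‖ ^ 2 = ‖x‖ ^ 2 + 2 * ⟪x, v⟫ + ‖v‖ ^ 2 := by
        have : y = x + v := by rw [hvdef]; abel
        rw [this, norm_add_sq_real]
      rw [hinner, hnorm] at hs1
      rw [h2] at hcv
      rw [h1] at hcv
      have key2 : s * (φ y - φ x - ⟪p, v⟫ - ε * ‖v‖ - C / 2 * ‖v‖ ^ 2) ≤ 0 := by
        nlinarith [hcv, hs1, mul_nonneg (mul_nonneg hC (sq_nonneg ‖v‖)) (sq_nonneg s)]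
      nlinarith [key2, hs0]
    have h2 : ∀ ε' > (0:ℝ), φ y - φ x - ⟪p, v⟫ - C / 2 * ‖v‖ ^ 2 ≤ ε' := by
      intro ε' hε'
      have := key (ε' / ‖v‖) (div_pos hε' hvpos)
      rwa [div_mul_cancel₀ _ (ne_of_gt hvpos)] at this
    linarith [le_of_forall_pos_le_add (by intro ε hε; linarith [h2 ε hε])
      (a := φ y - φ x - ⟪p, v⟫ - C / 2 * ‖v‖ ^ 2) (b := 0)]
  · intro h ε hε
    have hr : (0:ℝ) < 2 * ε / (C + 1) := by positivity
    filter_upwards [Metric.closedBall_mem_nhds x hr] with y hy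
    have hd : ‖y - x‖ ≤ 2 * ε / (C + 1) := by
      rw [← dist_eq_norm]; exact Metric.mem_closedBall.1 hy
    have hC1 : 0 < C + 1 := by linarith
    have hb : C / 2 * ‖y - x‖ ^ 2 ≤ ε * ‖y - x‖ := by
      rw [pow_two]
      have h3 : C / 2 * ‖y - x‖ ≤ ε := by
        calc C / 2 * ‖y - x‖ ≤ C / 2 * (2 * ε / (C + 1)) := by
              apply mul_le_mul_of_nonneg_left hd (by linarith)
          _ = ε * (C / (C + 1)) := by field_simp
          _ ≤ ε * 1 := by
              apply mul_le_mul_of_nonneg_left _ hε.le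
              rw [div_le_one hC1]; linarith
          _ = ε := mul_one ε
      calc C / 2 * (‖y - x‖ * ‖y - x‖) = (C / 2 * ‖y - x‖) * ‖y - x‖ := by ring
        _ ≤ ε * ‖y - x‖ := mul_le_mul_of_nonneg_right h3 (norm_nonneg _)
    linarith [h y]

/-- Supergradients of a `κ`-Lipschitz semiconcave function have norm at most `κ`. -/
lemma norm_le_of_global {κ : ℝ≥0} {φ : E n → ℝ} (hφLip : LipschitzWith κ φ)
    {C : ℝ} (hC : 0 ≤ C) {x p : E n}
    (hglob : ∀ y, φ y - φ x - ⟪p, y - x⟫ ≤ C / 2 * ‖y - x‖ ^ 2) :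
    ‖p‖ ≤ (κ:ℝ) := by
  have key : ∀ s : ℝ, 0 < s → s * ‖p‖ ^ 2 ≤ κ * (s * ‖p‖) + C / 2 * (s ^ 2 * ‖p‖ ^ 2) := by
    intro s hs
    have h := hglob (x - s • p)
    have h1 : x - s • p - x = -(s • p) := by abel
    rw [h1] at h
    have h2 : ⟪p, -(s • p)⟫ = -(s * ‖p‖ ^ 2) := by
      rw [inner_neg_right, real_inner_smul_right, real_inner_self_eq_norm_sq]
    have h3 : ‖-(s • p)‖ = s * ‖p‖ := by
      rw [norm_neg, norm_smul, Real.norm_eq_abs, abs_of_pos hs]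
    rw [h2, h3] at h
    have h4 : φ x - φ (x - s • p) ≤ κ * (s * ‖p‖) := by
      have := hφLip.dist_le_mul x (x - s • p)
      rw [Real.dist_eq, dist_eq_norm] at this
      have h5 : x - (x - s • p) = s • p := by abel
      rw [h5] at this
      have h6 : ‖s • p‖ = s * ‖p‖ := by
        rw [norm_smul, Real.norm_eq_abs, abs_of_pos hs]
      rw [h6] at this
      calc φ x - φ (x - s • p) ≤ |φ x - φ (x - s • p)| := le_abs_self _
        _ ≤ κ * (s * ‖p‖) := this
    nlinarith [h, h4]
  have key2 : ‖p‖ ^ 2 ≤ κ * ‖p‖ := by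
    refine le_of_forall_pos_le_add ?_
    intro ε hε
    have hs : (0:ℝ) < 2 * ε / (C * ‖p‖ ^ 2 + 1) := by positivity
    have := key _ hs
    have hC1 : (0:ℝ) < C * ‖p‖ ^ 2 + 1 := by positivity
    have hb : C / 2 * ((2 * ε / (C * ‖p‖ ^ 2 + 1)) * ‖p‖ ^ 2) ≤ ε := by
      calc C / 2 * ((2 * ε / (C * ‖p‖ ^ 2 + 1)) * ‖p‖ ^ 2)
          = ε * (C * ‖p‖ ^ 2 / (C * ‖p‖ ^ 2 + 1)) := by field_simp
        _ ≤ ε * 1 := by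
            apply mul_le_mul_of_nonneg_left _ hε.le
            rw [div_le_one hC1]; linarith
        _ = ε := mul_one ε
    nlinarith [this, hs, hb]
  nlinarith [key2, norm_nonneg p, κ.coe_nonneg]

/-- A Tonelli Hamiltonian is convex in the momentum: the gradient inequality. -/
lemma tonelli_convex {H : E n → E n → ℝ} (hH : IsTonelli H) (x p q : E n) :
    H x p + ⟪Hp H x p, q - p⟫ ≤ H x q := by
  have hx2 : ContDiff ℝ 2 (fun p : E n => H x p) :=
    hH.smooth.comp ((contDiff_const (c := x)).prodMk contDiff_id)
  by_cases hw : q - p = 0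
  · have : q = p := by rwa [sub_eq_zero] at hw
    simp [this, hw]
  set w := q - p with hwdef
  have hdiff : Differentiable ℝ (H x) := hx2.differentiable (by norm_num)
  set F := fun z : E n => fderiv ℝ (H x) z with hF
  have hFc1 : ContDiff ℝ 1 F := hx2.fderiv_right (by norm_num)
  set line := fun r : ℝ => p + r • w with hline
  have hlined : ∀ r : ℝ, HasDerivAt line w r := by
    intro r
    have : HasDerivAt (fun r : ℝ => r • w) ((1:ℝ) • w) r := (hasDerivAt_id r).smul_const w
    rw [one_smul] at this; exact this.const_add p
  set φ' := fun r : ℝ => F (line r) w with hφ'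
  have hd1 : ∀ r : ℝ, HasDerivAt (fun r => H x (line r)) (φ' r) r := by
    intro r
    exact ((hdiff (line r)).hasFDerivAt).comp_hasDerivAt r (hlined r)
  have hd2 : ∀ r : ℝ, HasDerivAt φ' (iteratedFDeriv ℝ 2 (H x) (line r) ![w, w]) r := by
    intro r
    have h1 : HasDerivAt (fun r => F (line r)) (fderiv ℝ F (line r) w) r :=
      ((hFc1.differentiable (by norm_num)) (line r)).hasFDerivAt.comp_hasDerivAt r (hlined r)
    have h2 := (ContinuousLinearMap.apply ℝ ℝ w).hasFDerivAt.comp_hasDerivAt r h1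
    have h3 : iteratedFDeriv ℝ 2 (H x) (line r) ![w, w]
        = fderiv ℝ F (line r) w w := by
      rw [iteratedFDeriv_two_apply]
      simp [hF]
    rw [h3]
    exact h2
  have hmono : StrictMono φ' := by
    apply strictMono_of_deriv_pos
    intro r
    rw [(hd2 r).deriv]
    exact hH.posdef x (line r) w hw
  obtain ⟨c, hc, hceq⟩ := exists_hasDerivAt_eq_slope (fun r => H x (line r)) φ'
    (by norm_num : (0:ℝ) < 1)
    (fun r _ => (hd1 r).continuousAt.continuousWithinAt)
    (fun r _ => hd1 r)
  have h0 : φ' 0 ≤ φ' c := (hmono.le_iff_le).2 hc.1.le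
  have hl0 : line 0 = p := by simp [hline]
  have hl1 : line 1 = q := by simp [hline, hwdef]
  rw [hl0, hl1] at hceq
  have hgrad : ⟪Hp H x p, w⟫ = φ' 0 := by
    have hg : HasGradientAt (H x) (gradient (H x) p) p := (hdiff p).hasGradientAt
    have hfd := hg.hasFDerivAt
    have : fderiv ℝ (H x) p = (InnerProductSpace.toDual ℝ (E n)) (gradient (H x) p) :=
      hfd.fderiv
    simp only [hφ', hl0, hF, this]
    rfl
  have : H x q - H x p = φ' c := by
    rw [hceq]; field_simp; ring
  rw [Hp] at hgrad
  rw [Hp, hgrad]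
  linarith [h0, this]

/-- The minimal energy along the minimal selection is lower semicontinuous. -/
lemma lsc_energy {C : ℝ} {φ : E n → ℝ} (hφc : Continuous φ)
    (hglob : ∀ x p : E n, p ∈ superdiff φ x ↔
      ∀ y, φ y - φ x - ⟪p, y - x⟫ ≤ C / 2 * ‖y - x‖ ^ 2)
    {H : E n → E n → ℝ} (hHc : Continuous fun z : E n × E n => H z.1 z.2)
    {ps : E n → E n} (hps : MinSel φ H ps)
    {κ : ℝ≥0} (hnorm : ∀ x, ‖ps x‖ ≤ (κ:ℝ)) :
    LowerSemicontinuous fun x => H x (ps x) := by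
  intro x c hc
  by_contra hcon
  rw [Filter.not_eventually] at hcon
  simp only [not_lt] at hcon
  rw [Filter.frequently_iff_neBot] at hcon
  set F := 𝓝 x ⊓ 𝓟 {y | H y (ps y) ≤ c} with hFdef
  haveI : F.NeBot := hcon
  set m : E n → E n × E n := fun y => (y, ps y) with hm
  set G := F.map m with hG
  haveI : G.NeBot := Filter.map_neBot
  have hK : IsCompact ((Metric.closedBall x 1) ×ˢ (Metric.closedBall (0:E n) κ)) :=
    (isCompact_closedBall _ _).prod (isCompact_closedBall _ _)
  have hGK : G ≤ 𝓟 ((Metric.closedBall x 1) ×ˢ (Metric.closedBall (0:E n) κ)) := by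
    rw [Filter.le_principal_iff, Filter.mem_map]
    have hball : ∀ᶠ y in 𝓝 x, y ∈ Metric.closedBall x 1 := by
      rw [Filter.eventually_iff]; exact Metric.closedBall_mem_nhds x one_pos
    have h1 : ∀ᶠ y in F, y ∈ Metric.closedBall x 1 := hball.filter_mono inf_le_left
    filter_upwards [h1] with y hy
    exact ⟨hy, by rw [mem_closedBall_zero_iff]; exact hnorm y⟩
  obtain ⟨z, hzK, hz⟩ := hK.exists_clusterPt hGK
  obtain ⟨a, pp⟩ := z
  have ha : a = x := by
    have h1 : Filter.map Prod.fst G = F := by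
      rw [hG, Filter.map_map]
      exact Filter.map_id
    have hnb : (𝓝 (a, pp) ⊓ G).NeBot := hz
    haveI := hnb.map Prod.fst
    have h2 : (𝓝 a ⊓ 𝓝 x).NeBot := by
      refine Filter.neBot_of_le (f := (𝓝 (a, pp) ⊓ G).map Prod.fst) ?_
      calc Filter.map Prod.fst (𝓝 (a, pp) ⊓ G)
          ≤ Filter.map Prod.fst (𝓝 (a, pp)) ⊓ Filter.map Prod.fst G :=
            Filter.map_inf_le
        _ ≤ 𝓝 a ⊓ 𝓝 x := inf_le_inf (continuous_fst.tendsto (a, pp)) (h1 ▸ inf_le_left)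
    exact eq_of_nhds_neBot h2
  subst ha
  have hS : IsClosed {z : E n × E n | ∀ y, φ y - φ z.1 - ⟪z.2, y - z.1⟫ ≤ C / 2 * ‖y - z.1‖ ^ 2} := by
    have : {z : E n × E n | ∀ y, φ y - φ z.1 - ⟪z.2, y - z.1⟫ ≤ C / 2 * ‖y - z.1‖ ^ 2}
        = ⋂ y, {z : E n × E n | φ y - φ z.1 - ⟪z.2, y - z.1⟫ ≤ C / 2 * ‖y - z.1‖ ^ 2} := by
      ext z; simp
    rw [this]
    refine isClosed_iInter fun y => isClosed_le ?_ ?_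
    · exact (continuous_const.sub (hφc.comp continuous_fst)).sub
        (Continuous.inner continuous_snd (continuous_const.sub continuous_fst))
    · exact continuous_const.mul
        (((continuous_const.sub continuous_fst).norm).pow 2)
  have hzS : ∀ y, φ y - φ a - ⟪pp, y - a⟫ ≤ C / 2 * ‖y - a‖ ^ 2 := by
    have hGS : G ≤ 𝓟 {z : E n × E n | ∀ y, φ y - φ z.1 - ⟪z.2, y - z.1⟫ ≤ C / 2 * ‖y - z.1‖ ^ 2} := by
      rw [Filter.le_principal_iff, Filter.mem_map]
      exact Filter.Eventually.of_forall (fun y => (hglob y (ps y)).1 (hps y).1)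
    have := mem_closure_iff_clusterPt.2 (hz.mono hGS)
    rwa [hS.closure_eq] at this
  have hHa : H a pp ≤ c := by
    have hS2 : IsClosed {z : E n × E n | H z.1 z.2 ≤ c} := isClosed_le hHc continuous_const
    have hGS2 : G ≤ 𝓟 {z : E n × E n | H z.1 z.2 ≤ c} := by
      rw [Filter.le_principal_iff, Filter.mem_map]
      have : ∀ᶠ y in F, H y (ps y) ≤ c := by
        refine Filter.Eventually.filter_mono inf_le_right ?_
        exact Filter.eventually_principal.2 (fun _ h => h)
      exact this.mono (fun y hy => hy)
    have := mem_closure_iff_clusterPt.2 (hz.mono hGS2)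
    rwa [hS2.closure_eq] at this
  have hppsd : pp ∈ superdiff φ a := (hglob a pp).2 hzS
  have := (hps a).2 pp hppsd
  simp only at hc
  linarith

/-- Fundamental theorem of calculus for Lipschitz functions with an a.e. derivative. -/
lemma ftc_lip {f f' : ℝ → ℝ} {a b : ℝ} {M : ℝ≥0} (hab : a < b)
    (hf : LipschitzOnWith M f (Set.Icc a b))
    (hd : ∀ᵐ x ∂(volume.restrict (Set.Ioo a b)), HasDerivAt f (f' x) x) :
    IntervalIntegrable f' volume a b ∧ ∫ x in a..b, f' x = f b - f a := by
  obtain ⟨g, hg, hfg⟩ := hf.extend_real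
  have hgc : Continuous g := hg.continuous
  set μ := volume.restrict (Set.Ioo a b) with hμ
  set q : ℕ → ℝ → ℝ := fun k x => (g (x + ((k:ℝ)+1)⁻¹) - g x) * ((k:ℝ)+1) with hq
  have hqc : ∀ k, Continuous (q k) := fun k =>
    ((hgc.comp (continuous_id.add continuous_const)).sub hgc).mul continuous_const
  have hek : ∀ k : ℕ, (0:ℝ) < ((k:ℝ)+1)⁻¹ := fun k => by positivity
  have hseqgen : ∀ c : ℝ, Tendsto (fun k : ℕ => c + ((k:ℝ)+1)⁻¹) atTop (𝓝[≠] c) := by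
    intro c
    apply tendsto_nhdsWithin_of_tendsto_nhds_of_eventually_within
    · have : Tendsto (fun k : ℕ => ((k:ℝ)+1)⁻¹) atTop (𝓝 0) :=
        tendsto_one_div_add_atTop_nhds_zero_nat.congr (by intro k; rw [one_div])
      simpa using tendsto_const_nhds.add this
    · exact Filter.Eventually.of_forall fun k => by
        simp only [mem_compl_iff, mem_singleton_iff]
        have := hek k; intro hcontra
        have h0 : ((k:ℝ)+1)⁻¹ = 0 := by linarith [add_left_cancel (hcontra.trans (add_zero c).symm)]
        rw [h0] at this; exact lt_irrefl 0 this
  -- a.e. convergence to f'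
  have h_lim : ∀ᵐ x ∂μ, Tendsto (fun k => q k x) atTop (𝓝 (f' x)) := by
    filter_upwards [hd, ae_restrict_mem measurableSet_Ioo] with x hx hmem
    have hgx : HasDerivAt g (f' x) x := by
      apply hx.congr_of_eventuallyEq
      filter_upwards [Icc_mem_nhds hmem.1 hmem.2] with y hy
      exact (hfg hy).symm
    have hslope := hasDerivAt_iff_tendsto_slope.1 hgx
    have hseq : Tendsto (fun k : ℕ => x + ((k:ℝ)+1)⁻¹) atTop (𝓝[≠] x) := hseqgen x
    have := hslope.comp hseq
    apply this.congr
    intro k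
    show slope g x (x + ((k:ℝ)+1)⁻¹) = q k x
    rw [slope_def_field, add_sub_cancel_left, div_eq_mul_inv, inv_inv]
  -- uniform bound
  have h_bound : ∀ k, ∀ᵐ x ∂μ, ‖q k x‖ ≤ (M:ℝ) := by
    intro k
    apply Filter.Eventually.of_forall
    intro x
    have := hg.dist_le_mul (x + ((k:ℝ)+1)⁻¹) x
    rw [Real.dist_eq, Real.dist_eq] at this
    simp only [add_sub_cancel_left] at this
    rw [abs_of_pos (hek k)] at this
    rw [hq]
    simp only [Real.norm_eq_abs, abs_mul]
    rw [abs_of_pos (by positivity : (0:ℝ) < (k:ℝ)+1)]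
    calc |g (x + ((k:ℝ)+1)⁻¹) - g x| * ((k:ℝ)+1)
        ≤ (M:ℝ) * ((k:ℝ)+1)⁻¹ * ((k:ℝ)+1) := by
          apply mul_le_mul_of_nonneg_right this (by positivity)
      _ = (M:ℝ) := by field_simp
  haveI : IsFiniteMeasure μ := by
    constructor
    rw [hμ, Measure.restrict_apply_univ]
    exact measure_Ioo_lt_top
  have hDCT := MeasureTheory.tendsto_integral_of_dominated_convergence
    (F := q) (f := f') (bound := fun _ => (M:ℝ))
    (fun k => (hqc k).aestronglyMeasurable)
    (integrable_const _) h_bound h_lim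
  have hgint : ∀ u v : ℝ, IntervalIntegrable g volume u v := fun u v => hgc.intervalIntegrable u v
  have hint : ∀ k : ℕ, ∫ x, q k x ∂μ =
      ((∫ x in b..(b + ((k:ℝ)+1)⁻¹), g x) - ∫ x in a..(a + ((k:ℝ)+1)⁻¹), g x) * ((k:ℝ)+1) := by
    intro k
    set e := ((k:ℝ)+1)⁻¹ with he
    have h1 : ∫ x, q k x ∂μ = ∫ x in a..b, q k x := by
      rw [hμ, ← MeasureTheory.integral_Ioc_eq_integral_Ioo,
        intervalIntegral.integral_of_le hab.le]
    rw [h1, hq]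
    simp only
    rw [intervalIntegral.integral_mul_const]
    congr 1
    have hgsh : Continuous fun x : ℝ => g (x + e) := hgc.comp (continuous_add_right e)
    rw [intervalIntegral.integral_sub (hgsh.intervalIntegrable a b) (hgint a b)]
    have h2 : (∫ x in a..b, g (x + e)) = ∫ x in (a+e)..(b+e), g x :=
      intervalIntegral.integral_comp_add_right g e
    have h3 : (∫ x in (a+e)..(b+e), g x) = (∫ x in (a+e)..b, g x) + ∫ x in b..(b+e), g x :=
      (intervalIntegral.integral_add_adjacent_intervals (hgint _ _) (hgint _ _)).symm
    have h4 : (∫ x in a..b, g x) = (∫ x in a..(a+e), g x) + ∫ x in (a+e)..b, g x :=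
      (intervalIntegral.integral_add_adjacent_intervals (hgint _ _) (hgint _ _)).symm
    rw [h2, h3, h4]
    ring
  have hlim2 : Tendsto (fun k : ℕ => ∫ x, q k x ∂μ) atTop (𝓝 (g b - g a)) := by
    have hder : ∀ c : ℝ, Tendsto
        (fun k : ℕ => (∫ x in c..(c + ((k:ℝ)+1)⁻¹), g x) * ((k:ℝ)+1)) atTop (𝓝 (g c)) := by
      intro c
      have hFb : HasDerivAt (fun y => ∫ x in c..y, g x) (g c) c :=
        intervalIntegral.integral_hasDerivAt_right (hgint c c)
          (hgc.stronglyMeasurableAtFilter _ _) hgc.continuousAt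
      have hslope := hasDerivAt_iff_tendsto_slope.1 hFb
      have := hslope.comp (hseqgen c)
      apply this.congr
      intro k
      show slope (fun y => ∫ x in c..y, g x) c (c + ((k:ℝ)+1)⁻¹) = _
      rw [slope_def_field, add_sub_cancel_left, div_eq_mul_inv, inv_inv,
        intervalIntegral.integral_same, sub_zero]
    refine Tendsto.congr (fun k => ?_) ((hder b).sub (hder a))
    rw [hint k]; ring
  have hkey : ∫ x, f' x ∂μ = f b - f a := by
    have := tendsto_nhds_unique hDCT hlim2
    rw [this, hfg (left_mem_Icc.2 hab.le), hfg (right_mem_Icc.2 hab.le)]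
  have hmeas : AEMeasurable f' μ :=
    aemeasurable_of_tendsto_metrizable_ae _ (fun k => (hqc k).measurable.aemeasurable) h_lim
  have hbd : ∀ᵐ x ∂μ, ‖f' x‖ ≤ (M:ℝ) := by
    filter_upwards [h_lim, ae_all_iff.2 h_bound] with x hx hbx
    exact le_of_tendsto (hx.norm) (Filter.Eventually.of_forall hbx)
  have hInt : Integrable f' μ :=
    Integrable.mono' (integrable_const _) hmeas.aestronglyMeasurable hbd
  have hIntOn : IntegrableOn f' (Set.Ioc a b) volume := by
    rw [integrableOn_Ioc_iff_integrableOn_Ioo]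
    exact hInt
  have hII : IntervalIntegrable f' volume a b := by
    rw [intervalIntegrable_iff_integrableOn_Ioc_of_le hab.le]
    exact hIntOn
  refine ⟨hII, ?_⟩
  rw [intervalIntegral.integral_of_le hab.le, MeasureTheory.integral_Ioc_eq_integral_Ioo]
  exact hkey

/-- If `g` has a derivative at an interior point `s` and satisfies a one-sided parabolic
bound around `s`, then the derivative vanishes. -/
lemma deriv_eq_zero_of_parabolic {g : ℝ → ℝ} {d A t0 T0 s : ℝ} (hd : HasDerivAt g d s)
    (h0 : t0 < s) (h1 : s < T0)
    (hpar : ∀ r ∈ Set.Icc t0 T0, g r - g s ≤ A * (r - s)^2) : d = 0 := by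
  have hslope := hasDerivAt_iff_tendsto_slope.1 hd
  have hle : d ≤ 0 := by
    have hr : Tendsto (slope g s) (𝓝[>] s) (𝓝 d) :=
      hslope.mono_left (nhdsWithin_mono s (fun r hr => hr.ne'))
    have hlin : Tendsto (fun r => A * (r - s)) (𝓝[>] s) (𝓝 0) := by
      have : Tendsto (fun r : ℝ => A * (r - s)) (𝓝 s) (𝓝 (A * (s - s))) :=
        (continuous_const.mul (continuous_id.sub continuous_const)).tendsto s
      simpa using this.mono_left nhdsWithin_le_nhds
    have hev : ∀ᶠ r in 𝓝[>] s, slope g s r ≤ A * (r - s) := by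
      have hmem : ∀ᶠ r in 𝓝[>] s, r ∈ Set.Iio T0 :=
        (isOpen_Iio.eventually_mem h1).filter_mono nhdsWithin_le_nhds
      filter_upwards [self_mem_nhdsWithin, hmem] with r hrs hrT
      have hrs' : s < r := hrs
      have hb := hpar r ⟨by linarith, (le_of_lt hrT)⟩
      rw [slope_def_field]
      rw [div_le_iff₀ (by linarith : (0:ℝ) < r - s)]
      nlinarith [hb]
    simpa using le_of_tendsto_of_tendsto hr hlin hev
  have hge : 0 ≤ d := by
    have hr : Tendsto (slope g s) (𝓝[<] s) (𝓝 d) :=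
      hslope.mono_left (nhdsWithin_mono s (fun r hr => hr.ne))
    have hlin : Tendsto (fun r => A * (r - s)) (𝓝[<] s) (𝓝 0) := by
      have : Tendsto (fun r : ℝ => A * (r - s)) (𝓝 s) (𝓝 (A * (s - s))) :=
        (continuous_const.mul (continuous_id.sub continuous_const)).tendsto s
      simpa using this.mono_left nhdsWithin_le_nhds
    have hev : ∀ᶠ r in 𝓝[<] s, A * (r - s) ≤ slope g s r := by
      have hmem : ∀ᶠ r in 𝓝[<] s, r ∈ Set.Ioi t0 :=
        (isOpen_Ioi.eventually_mem h0).filter_mono nhdsWithin_le_nhds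
      filter_upwards [self_mem_nhdsWithin, hmem] with r hrs hrT
      have hrs' : r < s := hrs
      have hb := hpar r ⟨le_of_lt hrT, by linarith⟩
      rw [slope_def_field]
      rw [le_div_iff_of_neg (by linarith : r - s < 0)]
      nlinarith [hb]
    simpa using le_of_tendsto_of_tendsto hlin hr hev
  linarith

set_option maxHeartbeats 1000000 in
/-- Along a strict singular characteristic, every `t ∈ [0,T)` is a right Lebesgue
point of the energy `s ↦ H(γ(s), p♯(γ(s)))`. -/
theorem stmt10 (C : ℝ) (hC : 0 ≤ C) (κ : ℝ≥0) (φ : E n → ℝ)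
    (hφ : Semiconcave C φ) (hφLip : LipschitzWith κ φ)
    (H : E n → E n → ℝ) (hH : IsTonelli H)
    (ps : E n → E n) (hps : MinSel φ H ps)
    (T : ℝ) (hT : 0 < T) (γ : ℝ → E n) (K : ℝ≥0)
    (hγ : LipschitzOnWith K γ (Set.Icc 0 T))
    (hssc : ∀ᵐ t ∂(volume.restrict (Set.Icc 0 T)),
      HasDerivWithinAt γ (Hp H (γ t) (ps (γ t))) (Set.Icc 0 T) t) :
    ∀ t ∈ Set.Ico (0:ℝ) T,
      Tendsto (fun τ => (τ - t)⁻¹ * ∫ s in t..τ, H (γ s) (ps (γ s)))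
        (𝓝[Set.Ioc t T] t) (𝓝 (H (γ t) (ps (γ t)))) := by
  -- preliminaries
  have hglob : ∀ x p : E n, p ∈ superdiff φ x ↔
      ∀ y, φ y - φ x - ⟪p, y - x⟫ ≤ C / 2 * ‖y - x‖ ^ 2 :=
    fun x p => superdiff_global hC hφ
  have hns : ∀ x, ‖ps x‖ ≤ (κ:ℝ) :=
    fun x => norm_le_of_global hφLip hC ((hglob x (ps x)).1 (hps x).1)
  have hHcont : Continuous (fun z : E n × E n => H z.1 z.2) := hH.smooth.continuous
  have hlsc : LowerSemicontinuous (fun x => H x (ps x)) :=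
    lsc_energy hφLip.continuous hglob hHcont hps hns
  have hγc : ContinuousOn γ (Set.Icc 0 T) := hγ.continuousOn
  -- a bound for the energy on the relevant compact set
  obtain ⟨M₁, hM₁⟩ : ∃ M₁, ∀ z ∈ (γ '' Set.Icc 0 T) ×ˢ Metric.closedBall (0:E n) κ,
      ‖H z.1 z.2‖ ≤ M₁ := by
    have hcomp : IsCompact ((γ '' Set.Icc 0 T) ×ˢ Metric.closedBall (0:E n) κ) :=
      ((isCompact_Icc).image_of_continuousOn hγc).prod (isCompact_closedBall _ _)
    exact hcomp.exists_bound_of_continuousOn hHcont.continuousOn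
  have hubd : ∀ s ∈ Set.Icc (0:ℝ) T, ‖H (γ s) (ps (γ s))‖ ≤ M₁ := by
    intro s hs
    exact hM₁ (γ s, ps (γ s)) ⟨mem_image_of_mem γ hs, by
      rw [mem_closedBall_zero_iff]; exact hns (γ s)⟩
  -- integrability of the energy
  have humeas : AEMeasurable (fun s => H (γ s) (ps (γ s))) (volume.restrict (Set.Icc 0 T)) :=
    hlsc.measurable.comp_aemeasurable (hγc.aemeasurable measurableSet_Icc)
  have huint : IntegrableOn (fun s => H (γ s) (ps (γ s))) (Set.Icc 0 T) volume := by
    refine Integrable.mono' (integrable_const M₁) humeas.aestronglyMeasurable ?_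
    filter_upwards [ae_restrict_mem measurableSet_Icc] with s hs
    exact hubd s hs
  intro t ht
  obtain ⟨ht0, htT⟩ := ht
  set q := ps (γ t) with hqdef
  set v := fun s => Hp H (γ s) (ps (γ s)) with hvdef
  -- interval integrability of the energy on subintervals
  have huii : ∀ τ ∈ Set.Ioc t T, IntervalIntegrable (fun s => H (γ s) (ps (γ s))) volume t τ := by
    intro τ hτ
    rw [intervalIntegrable_iff_integrableOn_Ioc_of_le hτ.1.le]
    apply huint.mono_set
    intro s hs
    exact ⟨le_trans ht0 hs.1.le, le_trans hs.2 hτ.2⟩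
  -- the key upper estimate
  have hkey : ∀ τ ∈ Set.Ioc t T,
      (∫ s in t..τ, H (γ s) (ps (γ s))) ≤
        (∫ s in t..τ, H (γ s) q) + C / 2 * (K:ℝ)^2 * (τ - t)^2 := by
    intro τ hτ
    obtain ⟨hτt, hτT⟩ := hτ
    -- a.e. derivative of γ on (t, τ)
    have hae : ∀ᵐ s ∂(volume.restrict (Set.Ioo t τ)), HasDerivAt γ (v s) s := by
      have hsub : Set.Ioo t τ ⊆ Set.Icc 0 T := fun s hs =>
        ⟨le_trans ht0 (le_of_lt hs.1), le_trans hs.2.le hτT⟩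
      have h1 := ae_mono (Measure.restrict_mono hsub le_rfl) hssc
      filter_upwards [h1, ae_restrict_mem measurableSet_Ioo] with s hs hmem
      exact hs.hasDerivAt (Icc_mem_nhds (lt_of_le_of_lt ht0 hmem.1)
        (lt_of_lt_of_le hmem.2 hτT))
    -- FTC for ⟪q, γ s⟫
    have hftc2 : IntervalIntegrable (fun s => ⟪q, v s⟫) volume t τ ∧
        ∫ s in t..τ, ⟪q, v s⟫ = ⟪q, γ τ⟫ - ⟪q, γ t⟫ := by
      refine ftc_lip (f := fun s => ⟪q, γ s⟫) (f' := fun s => ⟪q, v s⟫) (M := ‖innerSL ℝ q‖₊ * K) hτt ?_ ?_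
      · have h1 : LipschitzOnWith (‖innerSL ℝ q‖₊ * K) ((innerSL ℝ q) ∘ γ) (Set.Icc 0 T) :=
          (innerSL ℝ q).lipschitz.comp_lipschitzOnWith hγ
        have h2 : (fun s => ⟪q, γ s⟫) = (innerSL ℝ q) ∘ γ := by
          ext s; simp
        rw [h2]
        exact h1.mono (fun s hs => ⟨le_trans ht0 hs.1, le_trans hs.2 hτT⟩)
      · filter_upwards [hae] with s hs
        have := (innerSL ℝ q).hasFDerivAt.comp_hasDerivAt s hs
        simpa [Function.comp_def] using this
    -- FTC for φ ∘ γ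
    have hftc3 : IntervalIntegrable (fun s => ⟪ps (γ s), v s⟫) volume t τ ∧
        ∫ s in t..τ, ⟪ps (γ s), v s⟫ = (φ ∘ γ) τ - (φ ∘ γ) t := by
      have hLip : LipschitzOnWith (κ * K) (φ ∘ γ) (Set.Icc 0 T) :=
        hφLip.comp_lipschitzOnWith hγ
      refine ftc_lip (f := φ ∘ γ) (f' := fun s => ⟪ps (γ s), v s⟫) (M := κ * K) hτt (hLip.mono (fun s hs => ⟨le_trans ht0 hs.1, le_trans hs.2 hτT⟩)) ?_
      -- Rademacher for the Lipschitz extension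
      obtain ⟨g1, hg1, hfg1⟩ := hLip.extend_real
      have hrad : ∀ᵐ s ∂volume, DifferentiableAt ℝ g1 s := hg1.ae_differentiableAt_real
      have hrad' : ∀ᵐ s ∂(volume.restrict (Set.Ioo t τ)), DifferentiableAt ℝ g1 s :=
        ae_restrict_of_ae hrad
      filter_upwards [hae, hrad', ae_restrict_mem measurableSet_Ioo] with s hs hdiff hmem
      have hs0T : s ∈ Set.Ioo (0:ℝ) T :=
        ⟨lt_of_le_of_lt ht0 hmem.1, lt_of_lt_of_le hmem.2 hτT⟩
      have hnhds : Set.Icc (0:ℝ) T ∈ 𝓝 s := Icc_mem_nhds hs0T.1 hs0T.2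
      have heq : (φ ∘ γ) =ᶠ[𝓝 s] g1 := by
        filter_upwards [hnhds] with r hr
        exact hfg1 hr
      have hd1 : HasDerivAt (φ ∘ γ) (deriv g1 s) s :=
        (hdiff.hasDerivAt).congr_of_eventuallyEq heq
      -- identify the derivative
      have hinner : HasDerivAt (fun r => ⟪ps (γ s), γ r⟫) ⟪ps (γ s), v s⟫ s := by
        have := (innerSL ℝ (ps (γ s))).hasFDerivAt.comp_hasDerivAt s hs
        simpa [Function.comp_def] using this
      have hG : HasDerivAt (fun r => (φ ∘ γ) r - ⟪ps (γ s), γ r⟫)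
          (deriv g1 s - ⟪ps (γ s), v s⟫) s := hd1.sub hinner
      have hpar : ∀ r ∈ Set.Icc (0:ℝ) T,
          ((φ ∘ γ) r - ⟪ps (γ s), γ r⟫) - ((φ ∘ γ) s - ⟪ps (γ s), γ s⟫)
            ≤ (C / 2 * (K:ℝ)^2) * (r - s)^2 := by
        intro r hr
        have h1 := (hglob (γ s) (ps (γ s))).1 (hps (γ s)).1 (γ r)
        have h2 : ‖γ r - γ s‖ ≤ (K:ℝ) * |r - s| := by
          have := hγ.dist_le_mul r hr s ⟨hs0T.1.le, hs0T.2.le⟩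
          rwa [dist_eq_norm, Real.dist_eq] at this
        have h3 : ‖γ r - γ s‖ ^ 2 ≤ (K:ℝ)^2 * (r - s)^2 := by
          have hnn : (0:ℝ) ≤ ‖γ r - γ s‖ := norm_nonneg _
          have h4 : ((K:ℝ) * |r - s|)^2 = (K:ℝ)^2 * (r - s)^2 := by
            rw [mul_pow, sq_abs]
          nlinarith [h2, hnn, abs_nonneg (r - s), K.coe_nonneg]
        have h5 : ⟪ps (γ s), γ r - γ s⟫ = ⟪ps (γ s), γ r⟫ - ⟪ps (γ s), γ s⟫ :=
          inner_sub_right _ _ _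
        have hmul : C / 2 * ‖γ r - γ s‖ ^ 2 ≤ C / 2 * ((K:ℝ)^2 * (r - s)^2) :=
          mul_le_mul_of_nonneg_left h3 (by linarith : (0:ℝ) ≤ C / 2)
        simp only [Function.comp_apply]
        linarith [h1, h5, hmul]
      have hzero : deriv g1 s - ⟪ps (γ s), v s⟫ = 0 :=
        deriv_eq_zero_of_parabolic hG hs0T.1 hs0T.2 hpar
      have : deriv g1 s = ⟪ps (γ s), v s⟫ := by linarith
      rwa [this] at hd1
    -- continuity hence integrability of s ↦ H (γ s) q
    have hρii : IntervalIntegrable (fun s => H (γ s) q) volume t τ := by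
      apply ContinuousOn.intervalIntegrable
      have : ContinuousOn (fun s => H (γ s) q) (Set.Icc t τ) := by
        have hsub : Set.Icc t τ ⊆ Set.Icc 0 T := fun s hs =>
          ⟨le_trans ht0 hs.1, le_trans hs.2 hτT⟩
        exact hHcont.comp_continuousOn (((hγc.mono hsub)).prodMk continuousOn_const)
      rwa [uIcc_of_le hτt.le]
    -- pointwise convexity estimate
    have hpt : ∀ s, H (γ s) (ps (γ s)) ≤ H (γ s) q - ⟪q, v s⟫ + ⟪ps (γ s), v s⟫ := by
      intro s
      have := tonelli_convex hH (γ s) (ps (γ s)) q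
      have h1 : ⟪Hp H (γ s) (ps (γ s)), q - ps (γ s)⟫
          = ⟪v s, q⟫ - ⟪v s, ps (γ s)⟫ := by
        rw [hvdef]; exact inner_sub_right _ _ _
      have h2 := real_inner_comm (v s) q
      have h3 := real_inner_comm (v s) (ps (γ s))
      rw [h1] at this
      linarith
    -- integrate the pointwise estimate
    have hRHSii : IntervalIntegrable
        (fun s => H (γ s) q - ⟪q, v s⟫ + ⟪ps (γ s), v s⟫) volume t τ :=
      (hρii.sub hftc2.1).add hftc3.1
    have hmono := intervalIntegral.integral_mono_on hτt.le (huii τ ⟨hτt, hτT⟩) hRHSii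
      (fun s _ => hpt s)
    have hsplit : (∫ s in t..τ, (H (γ s) q - ⟪q, v s⟫ + ⟪ps (γ s), v s⟫))
        = (∫ s in t..τ, H (γ s) q) - (∫ s in t..τ, ⟪q, v s⟫) + ∫ s in t..τ, ⟪ps (γ s), v s⟫ := by
      rw [intervalIntegral.integral_add (hρii.sub hftc2.1) hftc3.1,
        intervalIntegral.integral_sub hρii hftc2.1]
    -- semiconcavity at γ t
    have hsc : (φ ∘ γ) τ - (φ ∘ γ) t - (⟪q, γ τ⟫ - ⟪q, γ t⟫) ≤ C / 2 * (K:ℝ)^2 * (τ - t)^2 := by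
      have h1 := (hglob (γ t) q).1 (hps (γ t)).1 (γ τ)
      have h2 : ⟪q, γ τ - γ t⟫ = ⟪q, γ τ⟫ - ⟪q, γ t⟫ := inner_sub_right _ _ _
      have h3 : ‖γ τ - γ t‖ ≤ (K:ℝ) * |τ - t| := by
        have := hγ.dist_le_mul τ ⟨le_trans ht0 hτt.le, hτT⟩ t ⟨ht0, htT.le⟩
        rwa [dist_eq_norm, Real.dist_eq] at this
      have h4 : ‖γ τ - γ t‖ ^ 2 ≤ (K:ℝ)^2 * (τ - t)^2 := by
        have h5 : ((K:ℝ) * |τ - t|)^2 = (K:ℝ)^2 * (τ - t)^2 := by rw [mul_pow, sq_abs]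
        nlinarith [h3, norm_nonneg (γ τ - γ t), abs_nonneg (τ - t), K.coe_nonneg]
      have hmul : C / 2 * ‖γ τ - γ t‖ ^ 2 ≤ C / 2 * ((K:ℝ)^2 * (τ - t)^2) :=
        mul_le_mul_of_nonneg_left h4 (by linarith : (0:ℝ) ≤ C / 2)
      simp only [Function.comp_apply]
      linarith [h1, h2, hmul]
    calc (∫ s in t..τ, H (γ s) (ps (γ s)))
        ≤ (∫ s in t..τ, H (γ s) q) - (∫ s in t..τ, ⟪q, v s⟫) + ∫ s in t..τ, ⟪ps (γ s), v s⟫ := by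
          rw [← hsplit]; exact hmono
      _ = (∫ s in t..τ, H (γ s) q) - (⟪q, γ τ⟫ - ⟪q, γ t⟫) + ((φ ∘ γ) τ - (φ ∘ γ) t) := by
          rw [hftc2.2, hftc3.2]
      _ ≤ (∫ s in t..τ, H (γ s) q) + C / 2 * (K:ℝ)^2 * (τ - t)^2 := by linarith [hsc]
  -- now the limit
  rw [Metric.tendsto_nhds]
  intro ε hε
  have hε4 : (0:ℝ) < ε / 4 := by linarith
  -- lower bound neighborhood from lower semicontinuity
  have hlsc_at : ∀ᶠ y in 𝓝 (γ t), H (γ t) (ps (γ t)) - ε / 4 < H y (ps y) :=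
    hlsc (γ t) _ (by linarith)
  have hγt : Tendsto γ (𝓝[Set.Icc 0 T] t) (𝓝 (γ t)) := hγc t ⟨ht0, htT.le⟩
  have h2 : ∀ᶠ s in 𝓝[Set.Icc 0 T] t, H (γ t) (ps (γ t)) - ε / 4 < H (γ s) (ps (γ s)) :=
    hγt.eventually hlsc_at
  obtain ⟨δ₀, hδ₀, hδ₀sub⟩ := Metric.mem_nhdsWithin_iff.1 h2
  -- upper bound neighborhood from continuity of s ↦ H (γ s) q
  have hρcont : Tendsto (fun s => H (γ s) q) (𝓝[Set.Icc 0 T] t) (𝓝 (H (γ t) q)) := by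
    have : ContinuousOn (fun s => H (γ s) q) (Set.Icc 0 T) :=
      hHcont.comp_continuousOn (hγc.prodMk continuousOn_const)
    exact this t ⟨ht0, htT.le⟩
  have h3 : ∀ᶠ s in 𝓝[Set.Icc 0 T] t, dist (H (γ s) q) (H (γ t) q) < ε / 4 :=
    Metric.tendsto_nhds.1 hρcont _ hε4
  obtain ⟨δ₁, hδ₁, hδ₁sub⟩ := Metric.mem_nhdsWithin_iff.1 h3
  -- quadratic error smallness
  set δ₂ : ℝ := (ε / 4) / (C / 2 * (K:ℝ)^2 + 1) with hδ₂def
  have hδ₂ : 0 < δ₂ := by positivity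
  set δ := min δ₀ (min δ₁ δ₂) with hδdef
  have hδ : 0 < δ := lt_min hδ₀ (lt_min hδ₁ hδ₂)
  have hball : ∀ᶠ τ in 𝓝[Set.Ioc t T] t, dist τ t < δ := by
    apply Filter.Eventually.filter_mono nhdsWithin_le_nhds
    rw [Filter.eventually_iff]
    exact Metric.ball_mem_nhds t hδ
  filter_upwards [self_mem_nhdsWithin, hball] with τ hτ hdist
  obtain ⟨hτt, hτT⟩ := hτ
  have hτtpos : 0 < τ - t := by linarith
  have hτδ : τ - t < δ := by
    rw [Real.dist_eq, abs_of_pos hτtpos] at hdist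
    exact hdist
  -- lower estimate for the integral
  have hlow : (H (γ t) (ps (γ t)) - ε / 4) * (τ - t) ≤ ∫ s in t..τ, H (γ s) (ps (γ s)) := by
    have hc : ∀ s ∈ Set.Icc t τ, H (γ t) (ps (γ t)) - ε / 4 ≤ H (γ s) (ps (γ s)) := by
      intro s hs
      have hsIcc : s ∈ Set.Icc (0:ℝ) T := ⟨le_trans ht0 hs.1, le_trans hs.2 hτT⟩
      have hsball : s ∈ Metric.ball t δ₀ := by
        rw [Metric.mem_ball, Real.dist_eq, abs_of_nonneg (by linarith [hs.1] : (0:ℝ) ≤ s - t)]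
        have : s - t ≤ τ - t := by linarith [hs.2]
        calc s - t ≤ τ - t := this
          _ < δ := hτδ
          _ ≤ δ₀ := min_le_left _ _
      have := hδ₀sub ⟨hsball, hsIcc⟩
      simp only [mem_setOf_eq] at this
      exact this.le
    have := intervalIntegral.integral_mono_on hτt.le
      (_root_.intervalIntegrable_const (c := H (γ t) (ps (γ t)) - ε / 4))
      (huii τ ⟨hτt, hτT⟩) hc
    rwa [intervalIntegral.integral_const, smul_eq_mul, mul_comm] at this
  -- upper estimate for the integral
  have hup : (∫ s in t..τ, H (γ s) (ps (γ s)))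
      ≤ (H (γ t) (ps (γ t)) + ε / 4 + ε / 4) * (τ - t) := by
    have h1 := hkey τ ⟨hτt, hτT⟩
    have h2 : (∫ s in t..τ, H (γ s) q) ≤ (H (γ t) q + ε / 4) * (τ - t) := by
      have hρii : IntervalIntegrable (fun s => H (γ s) q) volume t τ := by
        apply ContinuousOn.intervalIntegrable
        have hsub : Set.Icc t τ ⊆ Set.Icc 0 T := fun s hs =>
          ⟨le_trans ht0 hs.1, le_trans hs.2 hτT⟩
        have : ContinuousOn (fun s => H (γ s) q) (Set.Icc t τ) :=
          hHcont.comp_continuousOn (((hγc.mono hsub)).prodMk continuousOn_const)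
        rwa [uIcc_of_le hτt.le]
      have hc : ∀ s ∈ Set.Icc t τ, H (γ s) q ≤ H (γ t) q + ε / 4 := by
        intro s hs
        have hsIcc : s ∈ Set.Icc (0:ℝ) T := ⟨le_trans ht0 hs.1, le_trans hs.2 hτT⟩
        have hsball : s ∈ Metric.ball t δ₁ := by
          rw [Metric.mem_ball, Real.dist_eq, abs_of_nonneg (by linarith [hs.1] : (0:ℝ) ≤ s - t)]
          calc s - t ≤ τ - t := by linarith [hs.2]
            _ < δ := hτδ
            _ ≤ δ₁ := le_trans (min_le_right _ _) (min_le_left _ _)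
        have := hδ₁sub ⟨hsball, hsIcc⟩
        simp only [mem_setOf_eq] at this
        rw [Real.dist_eq] at this
        have := abs_lt.1 this
        linarith [this.2]
      have := intervalIntegral.integral_mono_on hτt.le hρii
        (_root_.intervalIntegrable_const (c := H (γ t) q + ε / 4)) hc
      rwa [intervalIntegral.integral_const, smul_eq_mul, mul_comm] at this
    have h3 : C / 2 * (K:ℝ)^2 * (τ - t)^2 ≤ ε / 4 * (τ - t) := by
      have hτδ₂ : τ - t ≤ δ₂ := le_trans hτδ.le (le_trans (min_le_right _ _) (min_le_right _ _))
      have h4 : C / 2 * (K:ℝ)^2 * (τ - t) ≤ ε / 4 := by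
        have h5 : C / 2 * (K:ℝ)^2 * (τ - t) ≤ C / 2 * (K:ℝ)^2 * δ₂ := by
          apply mul_le_mul_of_nonneg_left hτδ₂ (by positivity)
        have h6 : C / 2 * (K:ℝ)^2 * δ₂ ≤ ε / 4 := by
          rw [hδ₂def]
          rw [mul_div_assoc']
          rw [div_le_iff₀ (by positivity : (0:ℝ) < C / 2 * (K:ℝ)^2 + 1)]
          nlinarith [hε4, sq_nonneg (K:ℝ), hC]
        linarith
      nlinarith [h4, hτtpos]
    have hqt : H (γ t) q = H (γ t) (ps (γ t)) := by rw [hqdef]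
    calc (∫ s in t..τ, H (γ s) (ps (γ s)))
        ≤ (∫ s in t..τ, H (γ s) q) + C / 2 * (K:ℝ)^2 * (τ - t)^2 := h1
      _ ≤ (H (γ t) q + ε / 4) * (τ - t) + ε / 4 * (τ - t) := by linarith
      _ = (H (γ t) q + ε / 4 + ε / 4) * (τ - t) := by ring
      _ = (H (γ t) (ps (γ t)) + ε / 4 + ε / 4) * (τ - t) := by rw [hqt]
  -- conclude
  rw [Real.dist_eq, abs_lt]
  have hinv : 0 < (τ - t)⁻¹ := inv_pos.2 hτtpos
  have hne : τ - t ≠ 0 := ne_of_gt hτtpos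
  have hL : H (γ t) (ps (γ t)) - ε / 4 ≤ (τ - t)⁻¹ * ∫ s in t..τ, H (γ s) (ps (γ s)) := by
    have h := mul_le_mul_of_nonneg_left hlow hinv.le
    calc H (γ t) (ps (γ t)) - ε / 4
        = (τ - t)⁻¹ * ((H (γ t) (ps (γ t)) - ε / 4) * (τ - t)) := by
          rw [mul_comm _ (τ - t), ← mul_assoc, inv_mul_cancel₀ hne, one_mul]
      _ ≤ (τ - t)⁻¹ * ∫ s in t..τ, H (γ s) (ps (γ s)) := h
  have hU : (τ - t)⁻¹ * (∫ s in t..τ, H (γ s) (ps (γ s)))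
      ≤ H (γ t) (ps (γ t)) + ε / 4 + ε / 4 := by
    have h := mul_le_mul_of_nonneg_left hup hinv.le
    calc (τ - t)⁻¹ * (∫ s in t..τ, H (γ s) (ps (γ s)))
        ≤ (τ - t)⁻¹ * ((H (γ t) (ps (γ t)) + ε / 4 + ε / 4) * (τ - t)) := h
      _ = H (γ t) (ps (γ t)) + ε / 4 + ε / 4 := by
          rw [mul_comm _ (τ - t), ← mul_assoc, inv_mul_cancel₀ hne, one_mul]
  constructor <;> linarith
end
end

section
/- Let H : ℝ^n × ℝ^n → ℝ be a Tonelli Hamiltonian, ℤ^n-periodic in the x variable, and let u : ℝ^n → ℝ be a ℤ^n-periodic, Lipschitz, semiconcave weak KAM solution with critical value c, i.e. T⁻_t u = u − c·t for all t ≥ 0. Then T⁻_t(T⁺_t u) = u on ℝ^n for every t ≥ 0. -/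
open MeasureTheory Set Filter Topology intervalIntegral
open scoped RealInnerProductSpace NNReal ENNReal

noncomputable section

variable {n : ℕ}

/-- The integer vector `k` viewed as an element of `E n`. -/
def intVec (k : Fin n → ℤ) : E n :=
  (WithLp.equiv 2 (Fin n → ℝ)).symm (fun i => (k i : ℝ))

/-- `f` is `ℤⁿ`-periodic. -/
def ZPeriodic {α : Type*} (f : E n → α) : Prop :=
  ∀ (x : E n) (k : Fin n → ℤ), f (x + intVec k) = f x

/-- The fundamental solution `A_t(x,y)`: the infimum of the action over absolutely
continuous curves joining `x` to `y` in time `t`. -/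
def fundSol (L : E n → E n → ℝ) (t : ℝ) (x y : E n) : ℝ :=
  sInf {r : ℝ | ∃ ξ ξ' : ℝ → E n, ξ 0 = x ∧ ξ t = y ∧
    IntervalIntegrable ξ' MeasureTheory.volume 0 t ∧
    (∀ s ∈ Set.Icc 0 t, ξ s = x + ∫ u in (0:ℝ)..s, ξ' u) ∧
    r = ∫ s in (0:ℝ)..t, L (ξ s) (ξ' s)}

/-- The negative Lax–Oleinik operator `T⁻_t` (with `T⁻_0 = id`). -/
def Tminus (L : E n → E n → ℝ) (t : ℝ) (φ : E n → ℝ) (x : E n) : ℝ :=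
  if t ≤ 0 then φ x else ⨅ y : E n, (φ y + fundSol L t y x)

/-- The positive Lax–Oleinik operator `T⁺_t` (with `T⁺_0 = id`). -/
def Tplus (L : E n → E n → ℝ) (t : ℝ) (φ : E n → ℝ) (x : E n) : ℝ :=
  if t ≤ 0 then φ x else ⨆ y : E n, (φ y - fundSol L t x y)

/-- `φ` is a weak KAM solution with critical value `c`. -/
def WeakKAM (L : E n → E n → ℝ) (c : ℝ) (φ : E n → ℝ) : Prop :=
  ∀ t ≥ (0:ℝ), ∀ x, Tminus L t φ x = φ x - c * t

/-- The absolutely continuous curve `γ`, with a.e. derivative `γ'`, is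
`(φ,c)`-calibrated on `[a,b]`. -/
def IsCalibratedOn (L : E n → E n → ℝ) (c : ℝ) (φ : E n → ℝ) (a b : ℝ)
    (γ γ' : ℝ → E n) : Prop :=
  IntervalIntegrable γ' MeasureTheory.volume a b ∧
  (∀ s ∈ Set.Icc a b, γ s = γ a + ∫ u in a..s, γ' u) ∧
  ∀ s₁ ∈ Set.Icc a b, ∀ s₂ ∈ Set.Icc a b, s₁ ≤ s₂ →
    φ (γ s₂) - φ (γ s₁) = (∫ s in s₁..s₂, L (γ s) (γ' s)) + c * (s₂ - s₁)

/-- The cut time `τ_φ(x)` of `φ` at `x` (valued in `ℝ≥0∞`). -/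
def cutTime (L : E n → E n → ℝ) (c : ℝ) (φ : E n → ℝ) (x : E n) : ℝ≥0∞ :=
  ⨆ t ∈ {t : ℝ | 0 ≤ t ∧ ∃ γ γ' : ℝ → E n, γ 0 = x ∧ IsCalibratedOn L c φ 0 t γ γ'},
    ENNReal.ofReal t

/-- The cut locus of `φ`. -/
def cutLocus (L : E n → E n → ℝ) (c : ℝ) (φ : E n → ℝ) : Set (E n) :=
  {x | cutTime L c φ x = 0}

/-- Every element of the defining set of `fundSol` is bounded below by `-(M*t)`
when `L ≥ -M`. -/
lemma fundSol_mem_lb {L : E n → E n → ℝ} {M t : ℝ} (hM : 0 ≤ M) (ht : 0 ≤ t)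
    (hL : ∀ x v, -M ≤ L x v) (x y : E n) :
    ∀ r ∈ {r : ℝ | ∃ ξ ξ' : ℝ → E n, ξ 0 = x ∧ ξ t = y ∧
      IntervalIntegrable ξ' MeasureTheory.volume 0 t ∧
      (∀ s ∈ Set.Icc 0 t, ξ s = x + ∫ u in (0:ℝ)..s, ξ' u) ∧
      r = ∫ s in (0:ℝ)..t, L (ξ s) (ξ' s)}, -(M*t) ≤ r := by
  rintro r ⟨ξ, ξ', -, -, -, -, rfl⟩
  by_cases hi : IntervalIntegrable (fun s => L (ξ s) (ξ' s)) MeasureTheory.volume 0 t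
  · have hc : IntervalIntegrable (fun _ : ℝ => -M) MeasureTheory.volume 0 t :=
      intervalIntegrable_const
    have h := intervalIntegral.integral_mono_on ht hc hi (fun s _ => hL (ξ s) (ξ' s))
    rw [intervalIntegral.integral_const] at h
    have : (t - 0) • (-M) = -(M*t) := by simp [smul_eq_mul]; ring
    rw [this] at h
    exact h
  · rw [intervalIntegral.integral_undef hi]
    nlinarith

lemma fundSol_lb {L : E n → E n → ℝ} {M t : ℝ} (hM : 0 ≤ M) (ht : 0 ≤ t)
    (hL : ∀ x v, -M ≤ L x v) (x y : E n) : -(M*t) ≤ fundSol L t x y := by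
  rw [fundSol]
  rcases Set.eq_empty_or_nonempty {r : ℝ | ∃ ξ ξ' : ℝ → E n, ξ 0 = x ∧ ξ t = y ∧
      IntervalIntegrable ξ' MeasureTheory.volume 0 t ∧
      (∀ s ∈ Set.Icc 0 t, ξ s = x + ∫ u in (0:ℝ)..s, ξ' u) ∧
      r = ∫ s in (0:ℝ)..t, L (ξ s) (ξ' s)} with hS | hS
  · rw [hS, Real.sInf_empty]; nlinarith
  · exact le_csInf hS (fundSol_mem_lb hM ht hL x y)

lemma fundSol_self_le {L : E n → E n → ℝ} {M t : ℝ} (hM : 0 ≤ M) (ht : 0 ≤ t)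
    (hL : ∀ x v, -M ≤ L x v) (y : E n) : fundSol L t y y ≤ t * L y 0 := by
  have hmem : (∫ s in (0:ℝ)..t, L ((fun _ : ℝ => y) s) ((fun _ : ℝ => (0:E n)) s)) ∈
      {r : ℝ | ∃ ξ ξ' : ℝ → E n, ξ 0 = y ∧ ξ t = y ∧
        IntervalIntegrable ξ' MeasureTheory.volume 0 t ∧
        (∀ s ∈ Set.Icc 0 t, ξ s = y + ∫ u in (0:ℝ)..s, ξ' u) ∧
        r = ∫ s in (0:ℝ)..t, L (ξ s) (ξ' s)} :=
    ⟨fun _ => y, fun _ => 0, rfl, rfl, intervalIntegrable_const, fun s _ => by simp, rfl⟩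
  have h := csInf_le ⟨-(M*t), fundSol_mem_lb hM ht hL y y⟩ hmem
  rw [fundSol]
  refine h.trans ?_
  rw [intervalIntegral.integral_const]
  simp [smul_eq_mul]

/-- A weak KAM solution is a fixed point of `T⁻_t ∘ T⁺_t` for every `t ≥ 0`. -/
theorem stmt16 (H : E n → E n → ℝ) (hH : IsTonelli H)
    (hper : ∀ p : E n, ZPeriodic (fun x => H x p)) (c : ℝ) (u : E n → ℝ)
    (huper : ZPeriodic u) (huLip : ∃ κ : ℝ≥0, LipschitzWith κ u)
    (husc : ∃ C₀ : ℝ, 0 ≤ C₀ ∧ Semiconcave C₀ u)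
    (hwk : WeakKAM (Lag H) c u) :
    ∀ t : ℝ, 0 ≤ t → ∀ x : E n,
      Tminus (Lag H) t (Tplus (Lag H) t u) x = u x := by
  classical
  obtain ⟨κ, hκ⟩ := huLip
  -- decomposition into fundamental domain
  have hcube : ∀ x : E n, ∃ k : Fin n → ℤ, ∀ i, (x + intVec k) i ∈ Set.Icc (0:ℝ) 1 := by
    intro x
    refine ⟨fun i => -⌊x i⌋, fun i => ?_⟩
    have h1 := Int.floor_le (x i)
    have h2 := Int.lt_floor_add_one (x i)
    have hap : (x + intVec (fun i => -⌊x i⌋)) i = x i + ((-⌊x i⌋ : ℤ) : ℝ) := rfl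
    rw [hap]
    push_cast
    constructor <;> linarith
  have hnormcube : ∀ y : E n, (∀ i, y i ∈ Set.Icc (0:ℝ) 1) → ‖y‖ ≤ Real.sqrt n := by
    intro y hy
    rw [EuclideanSpace.norm_eq]
    apply Real.sqrt_le_sqrt
    calc (∑ i, ‖y i‖^2) ≤ ∑ _i : Fin n, 1 := by
          apply Finset.sum_le_sum
          intro i _
          have h := hy i
          rw [Real.norm_eq_abs, sq_abs]
          nlinarith [h.1, h.2]
      _ = n := by simp
  -- bound on u
  set U : ℝ := |u 0| + κ * Real.sqrt n with hUdef
  have hU : ∀ x, |u x| ≤ U := by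
    intro x
    obtain ⟨k, hk⟩ := hcube x
    have hxy : u x = u (x + intVec k) := (huper x k).symm
    have h1 : |u (x + intVec k) - u 0| ≤ κ * ‖(x + intVec k) - 0‖ := by
      have := hκ.dist_le_mul (x + intVec k) 0
      simpa [Real.dist_eq, dist_eq_norm] using this
    have h2 : ‖x + intVec k‖ ≤ Real.sqrt n := hnormcube _ hk
    have hκ0 : (0:ℝ) ≤ κ := κ.2
    rw [sub_zero] at h1
    have h3 : (κ : ℝ) * ‖x + intVec k‖ ≤ κ * Real.sqrt n :=
      mul_le_mul_of_nonneg_left h2 hκ0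
    rw [hxy]
    calc |u (x + intVec k)| = |(u (x + intVec k) - u 0) + u 0| := by ring_nf
      _ ≤ |u (x + intVec k) - u 0| + |u 0| := abs_add_le _ _
      _ ≤ U := by rw [hUdef]; linarith
  -- bound on H (·, 0)
  have hcont : Continuous fun x : E n => H x 0 :=
    hH.smooth.continuous.comp (continuous_id.prodMk continuous_const)
  have hC : IsCompact {y : E n | ∀ i, y i ∈ Set.Icc (0:ℝ) 1} := by
    have h : {y : E n | ∀ i, y i ∈ Set.Icc (0:ℝ) 1} =
        (EuclideanSpace.equiv (Fin n) ℝ).toHomeomorph ⁻¹' (Set.Icc 0 1) := by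
      ext y
      simp [Set.mem_Icc, Pi.le_def, forall_and]
    rw [h]
    exact (EuclideanSpace.equiv (Fin n) ℝ).toHomeomorph.isCompact_preimage.mpr isCompact_Icc
  obtain ⟨y₀, -, hmax'⟩ := hC.exists_isMaxOn ⟨0, fun i => by simp⟩ hcont.continuousOn
  have hmax := isMaxOn_iff.mp hmax'
  set M : ℝ := max (H y₀ 0) 0 with hMdef
  have hM0 : 0 ≤ M := le_max_right _ _
  have hM : ∀ x, H x 0 ≤ M := by
    intro x
    obtain ⟨k, hk⟩ := hcube x
    calc H x 0 = H (x + intVec k) 0 := (hper 0 x k).symm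
      _ ≤ H y₀ 0 := hmax _ hk
      _ ≤ M := le_max_left _ _
  -- Lagrangian bounds
  have hbdd : ∀ x v : E n, ∃ B : ℝ, ∀ p : E n, ⟪p, v⟫ - H x p ≤ B := by
    intro x v
    obtain ⟨B, hB⟩ := hH.superlinear ‖v‖ (norm_nonneg v)
    refine ⟨B, fun p => ?_⟩
    have h1 : ⟪p, v⟫ ≤ ‖p‖ * ‖v‖ := real_inner_le_norm p v
    have h2 := hB x p
    nlinarith [mul_comm ‖p‖ ‖v‖]
  have hLlb : ∀ x v : E n, -M ≤ Lag H x v := by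
    intro x v
    obtain ⟨B, hB⟩ := hbdd x v
    have hba : BddAbove (Set.range fun p : E n => ⟪p, v⟫ - H x p) :=
      ⟨B, by rintro _ ⟨p, rfl⟩; exact hB p⟩
    have h0 : (fun p : E n => ⟪p, v⟫ - H x p) 0 ≤ Lag H x v := le_ciSup hba 0
    simp only [inner_zero_left, zero_sub] at h0
    have := hM x
    rw [Lag] at *
    linarith
  obtain ⟨B₀, hB₀⟩ := hH.superlinear 0 le_rfl
  have hL0 : ∀ x : E n, Lag H x 0 ≤ B₀ := by
    intro x
    rw [Lag]
    apply ciSup_le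
    intro p
    have h := hB₀ x p
    rw [inner_zero_right]
    linarith
  -- main argument
  intro t ht x
  rcases ht.eq_or_lt with h0 | htpos
  · rw [← h0]; simp [Tminus, Tplus]
  have htn : ¬ t ≤ 0 := not_le.mpr htpos
  have ht0 : (0:ℝ) ≤ t := le_of_lt htpos
  have hTm : ∀ (φ : E n → ℝ) (z : E n),
      Tminus (Lag H) t φ z = ⨅ y : E n, (φ y + fundSol (Lag H) t y z) := by
    intro φ z; rw [Tminus, if_neg htn]
  have hTp : ∀ z : E n,
      Tplus (Lag H) t u z = ⨆ y : E n, (u y - fundSol (Lag H) t z y) := by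
    intro z; rw [Tplus, if_neg htn]
  have hAlb : ∀ y z : E n, -(M*t) ≤ fundSol (Lag H) t y z :=
    fun y z => fundSol_lb hM0 ht0 hLlb y z
  have hAself : ∀ y : E n, fundSol (Lag H) t y y ≤ t * B₀ := by
    intro y
    refine (fundSol_self_le hM0 ht0 hLlb y).trans ?_
    exact mul_le_mul_of_nonneg_left (hL0 y) ht0
  have hBddA : ∀ y : E n, BddAbove (Set.range fun z : E n => u z - fundSol (Lag H) t y z) := by
    intro y
    refine ⟨U + M*t, ?_⟩
    rintro _ ⟨z, rfl⟩
    have h1 := hU z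
    have h2 := hAlb y z
    have := abs_le.mp h1
    simp only
    linarith [this.2]
  have hBddI : ∀ z : E n, BddBelow (Set.range fun w : E n => u w + fundSol (Lag H) t w z) := by
    intro z
    refine ⟨-U - M*t, ?_⟩
    rintro _ ⟨w, rfl⟩
    have h1 := (abs_le.mp (hU w)).1
    have h2 := hAlb w z
    simp only
    linarith
  have hTub : ∀ y : E n, Tplus (Lag H) t u y ≤ u y + c * t := by
    intro y
    rw [hTp]
    apply ciSup_le
    intro z
    have hw := hwk t ht0 z
    rw [hTm u z] at hw
    have h1 : (⨅ w : E n, (u w + fundSol (Lag H) t w z)) ≤ u y + fundSol (Lag H) t y z :=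
      ciInf_le (hBddI z) y
    rw [hw] at h1
    linarith
  have hTlb : ∀ y z : E n, u z - fundSol (Lag H) t y z ≤ Tplus (Lag H) t u y := by
    intro y z
    rw [hTp]
    exact le_ciSup (hBddA y) z
  rw [hTm]
  apply le_antisymm
  · have hBddT : BddBelow (Set.range fun y : E n =>
        Tplus (Lag H) t u y + fundSol (Lag H) t y x) := by
      refine ⟨(-U - t*B₀) + -(M*t), ?_⟩
      rintro _ ⟨y, rfl⟩
      have h1 := hTlb y y
      have h2 := hAself y
      have h3 := (abs_le.mp (hU y)).1
      have h4 := hAlb y x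
      simp only
      linarith
    have hw := hwk t ht0 x
    rw [hTm u x] at hw
    have h6 : (⨅ y : E n, (Tplus (Lag H) t u y + fundSol (Lag H) t y x)) - c*t ≤
        ⨅ y : E n, (u y + fundSol (Lag H) t y x) := by
      apply le_ciInf
      intro y
      have h5 := ciInf_le hBddT y
      have h7 := hTub y
      linarith
    rw [hw] at h6
    linarith
  · apply le_ciInf
    intro y
    have := hTlb y x
    linarith
end
end
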